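/- arXiv:2011.05607 — 3 statements merged into one kernel-verified Lean document; each statement's English description precedes it below -/
import Mathlib

section
/- Let d ≥ 1 and let k be an integer with 1 ≤ k ≤ d. The facets (that is, the (d−1)-dimensional exposed faces) of the dilated polytope k·ρ_{d,k} are exactly the sets conv(G ∪ S) where, for some subset I ⊆ {1,…,d} of cardinality k and some choice of signs σ_i ∈ {−1,+1} for i ∈ I, G = {x ∈ [−1,1]^d : x_i = σ_i for all i ∈ I} is the corresponding (d−k)-dimensional face of γ_d and S is the (k−1)-dimensional regular simplex with vertex set {k σ_i e_i : i ∈ I}. -/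
open scoped Pointwise

noncomputable section

/-- The hypercube `γ_d = [-1,1]^d` in `ℝ^d`. -/
def hcube (d : ℕ) : Set (EuclideanSpace ℝ (Fin d)) := {x | ∀ i, |x i| ≤ 1}

/-- The cross-polytope `β_d = {x : ∑ |x_i| ≤ 1}` in `ℝ^d`. -/
def cross (d : ℕ) : Set (EuclideanSpace ℝ (Fin d)) := {x | ∑ i, |x i| ≤ 1}

/-- The polytope `ρ_{d,k} = conv(β_d ∪ (1/k)γ_d)`. -/
def rho (d : ℕ) (k : ℝ) : Set (EuclideanSpace ℝ (Fin d)) :=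
  convexHull ℝ (cross d ∪ (1 / k) • hcube d)

namespace FacetAux

open Set

variable {d : ℕ}

/-! ### The linear functional given by a coefficient vector -/

def lfun (u : Fin d → ℝ) : EuclideanSpace ℝ (Fin d) →ₗ[ℝ] ℝ where
  toFun x := ∑ i, u i * x i
  map_add' x y := by simp only [PiLp.add_apply, mul_add, Finset.sum_add_distrib]
  map_smul' c x := by
    simp only [PiLp.smul_apply, smul_eq_mul, RingHom.id_apply, Finset.mul_sum]
    exact Finset.sum_congr rfl fun i _ => by ring

lemma lfun_apply (u : Fin d → ℝ) (x : EuclideanSpace ℝ (Fin d)) :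
    lfun u x = ∑ i, u i * x i := rfl

lemma eucl_repr (x : EuclideanSpace ℝ (Fin d)) :
    x = ∑ i, x i • EuclideanSpace.single i (1:ℝ) := by
  ext j
  rw [WithLp.ofLp_sum, Finset.sum_apply]
  simp [EuclideanSpace.single_apply, Finset.sum_ite_eq', mul_ite]

lemma clm_eq_lfun (l : EuclideanSpace ℝ (Fin d) →L[ℝ] ℝ) (x : EuclideanSpace ℝ (Fin d)) :
    l x = lfun (fun i => l (EuclideanSpace.single i (1:ℝ))) x := by
  conv_lhs => rw [eucl_repr x]
  rw [map_sum]
  show _ = ∑ i, l (EuclideanSpace.single i 1) * x i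
  exact Finset.sum_congr rfl fun i _ => by rw [map_smul]; simp [mul_comm]

lemma lfun_single (u : Fin d → ℝ) (i : Fin d) (c : ℝ) :
    lfun u (c • EuclideanSpace.single i (1:ℝ)) = c * u i := by
  show (∑ j, u j * (c • EuclideanSpace.single i (1:ℝ)) j) = c * u i
  have : ∀ j, (c • EuclideanSpace.single i (1:ℝ)) j = if j = i then c else 0 := by
    intro j; simp [EuclideanSpace.single_apply]
  simp only [this, mul_ite, mul_zero, Finset.sum_ite_eq', Finset.mem_univ, if_true]
  ring

/-- coefficient vector supported at one coordinate -/
def sing (j : Fin d) (c : ℝ) : Fin d → ℝ := fun i => if i = j then c else 0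

lemma lfun_sing (j : Fin d) (c : ℝ) (x : EuclideanSpace ℝ (Fin d)) :
    lfun (sing j c) x = c * x j := by
  show (∑ i, (if i = j then c else 0) * x i) = c * x j
  simp only [ite_mul, zero_mul, Finset.sum_ite_eq', Finset.mem_univ, if_true]

/-! ### sign function -/

def sgn (u : Fin d → ℝ) (i : Fin d) : ℝ := if u i < 0 then -1 else 1

lemma sgn_pm (u : Fin d → ℝ) (i : Fin d) : sgn u i = 1 ∨ sgn u i = -1 := by
  unfold sgn; split <;> simp

lemma sgn_mul (u : Fin d → ℝ) (i : Fin d) : sgn u i * u i = |u i| := by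
  unfold sgn
  rcases lt_trichotomy (u i) 0 with h | h | h
  · rw [if_pos h, abs_of_neg h]; ring
  · simp [h]
  · rw [if_neg (not_lt.2 h.le), abs_of_pos h]; ring

lemma sgn_sq (u : Fin d → ℝ) (i : Fin d) : sgn u i * sgn u i = 1 := by
  rcases sgn_pm u i with h | h <;> rw [h] <;> norm_num

lemma eq_sgn_of_mul_eq_abs {u : Fin d → ℝ} {i : Fin d} (hu : u i ≠ 0) {t : ℝ}
    (h : u i * t = |u i|) : t = sgn u i := by
  have h2 : u i * t = u i * sgn u i := by rw [h, ← sgn_mul u i]; ring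
  exact mul_left_cancel₀ hu h2

/-! ### basic convexity facts -/

lemma convex_hcube : Convex ℝ (hcube d) := by
  intro x hx y hy a b ha hb hab i
  have h : (a • x + b • y) i = a * x i + b * y i := rfl
  rw [h]
  calc |a * x i + b * y i| ≤ |a * x i| + |b * y i| := abs_add_le _ _
    _ = a * |x i| + b * |y i| := by rw [abs_mul, abs_mul, abs_of_nonneg ha, abs_of_nonneg hb]
    _ ≤ a * 1 + b * 1 := by gcongr; exacts [hx i, hy i]
    _ = 1 := by linarith

lemma convex_cross : Convex ℝ (cross d) := by
  intro x hx y hy a b ha hb hab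
  have h : ∑ i, |(a • x + b • y) i| ≤ ∑ i, (a * |x i| + b * |y i|) := by
    refine Finset.sum_le_sum fun i _ => ?_
    have h2 : (a • x + b • y) i = a * x i + b * y i := rfl
    rw [h2]
    calc |a * x i + b * y i| ≤ |a * x i| + |b * y i| := abs_add_le _ _
      _ = a * |x i| + b * |y i| := by rw [abs_mul, abs_mul, abs_of_nonneg ha, abs_of_nonneg hb]
  refine le_trans h ?_
  rw [Finset.sum_add_distrib, ← Finset.mul_sum, ← Finset.mul_sum]
  calc a * ∑ i, |x i| + b * ∑ i, |y i| ≤ a * 1 + b * 1 := by gcongr; exacts [hx, hy]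
    _ = 1 := by linarith

lemma hcube_nonempty : (hcube d).Nonempty := ⟨0, fun i => by simp⟩
lemma cross_nonempty : (cross d).Nonempty := ⟨0, by simp [cross]⟩

lemma scaled_rho (k : ℝ) (hk : k ≠ 0) :
    k • rho d k = convexHull ℝ ((k • cross d) ∪ hcube d) := by
  rw [rho, ← convexHull_smul, smul_set_union]
  congr 1
  rw [smul_smul]
  norm_num [hk]

lemma mem_join {A B : Set (EuclideanSpace ℝ (Fin d))} (hA : Convex ℝ A) (hB : Convex ℝ B)
    (hA0 : A.Nonempty) (hB0 : B.Nonempty) {x : EuclideanSpace ℝ (Fin d)}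
    (hx : x ∈ convexHull ℝ (A ∪ B)) :
    ∃ a ∈ A, ∃ b ∈ B, ∃ α β : ℝ, 0 ≤ α ∧ 0 ≤ β ∧ α + β = 1 ∧ α • a + β • b = x := by
  rw [hA.convexHull_union hB hA0 hB0, mem_convexJoin] at hx
  obtain ⟨a, ha, b, hb, α, β, hα, hβ, hαβ, hx⟩ := hx
  exact ⟨a, ha, b, hb, α, β, hα, hβ, hαβ, hx⟩

/-! ### bounds of `lfun` over the two generators -/

lemma lfun_le_cross {u : Fin d → ℝ} {a : ℝ} (ha : 0 ≤ a) (hu : ∀ i, |u i| ≤ a)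
    {c : EuclideanSpace ℝ (Fin d)} (hc : c ∈ cross d) : lfun u c ≤ a := by
  calc lfun u c = ∑ i, u i * c i := rfl
    _ ≤ ∑ i, a * |c i| := by
        refine Finset.sum_le_sum fun i _ => ?_
        calc u i * c i ≤ |u i * c i| := le_abs_self _
          _ = |u i| * |c i| := abs_mul _ _
          _ ≤ a * |c i| := by gcongr; exact hu i
    _ = a * ∑ i, |c i| := by rw [Finset.mul_sum]
    _ ≤ a * 1 := by gcongr; exact hc
    _ = a := mul_one a

lemma lfun_le_cube {u : Fin d → ℝ} {b : EuclideanSpace ℝ (Fin d)} (hb : b ∈ hcube d) :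
    lfun u b ≤ ∑ i, |u i| := by
  show ∑ i, u i * b i ≤ ∑ i, |u i|
  refine Finset.sum_le_sum fun i _ => ?_
  calc u i * b i ≤ |u i * b i| := le_abs_self _
    _ = |u i| * |b i| := abs_mul _ _
    _ ≤ |u i| * 1 := by gcongr; exact hb i
    _ = |u i| := mul_one _

lemma eq_cube {u : Fin d → ℝ} {b : EuclideanSpace ℝ (Fin d)} (hb : b ∈ hcube d)
    (he : lfun u b = ∑ i, |u i|) : ∀ i, u i * b i = |u i| := by
  have h1 : ∀ i ∈ Finset.univ, u i * b i ≤ |u i| := fun i _ => by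
    calc u i * b i ≤ |u i * b i| := le_abs_self _
      _ = |u i| * |b i| := abs_mul _ _
      _ ≤ |u i| * 1 := by gcongr; exact hb i
      _ = |u i| := mul_one _
  have he' : ∑ i, u i * b i = ∑ i, |u i| := he
  have h2 := (Finset.sum_eq_sum_iff_of_le h1).mp he'
  intro i; exact h2 i (Finset.mem_univ i)

lemma eq_cross {u : Fin d → ℝ} {a : ℝ} (ha : 0 < a) (hu : ∀ i, |u i| ≤ a)
    {c : EuclideanSpace ℝ (Fin d)} (hc : c ∈ cross d) (he : lfun u c = a) :
    (∀ i, u i * c i = a * |c i|) ∧ ∑ i, |c i| = 1 := by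
  have hterm : ∀ i ∈ Finset.univ, u i * c i ≤ a * |c i| := fun i _ => by
    calc u i * c i ≤ |u i * c i| := le_abs_self _
      _ = |u i| * |c i| := abs_mul _ _
      _ ≤ a * |c i| := by gcongr; exact hu i
  have hsum : ∑ i, u i * c i ≤ ∑ i, a * |c i| := Finset.sum_le_sum hterm
  have h2 : ∑ i, a * |c i| ≤ a := by
    rw [← Finset.mul_sum]
    calc a * ∑ i, |c i| ≤ a * 1 := by gcongr; exact hc
      _ = a := mul_one a
  have he' : (∑ i, u i * c i) = a := he
  have heq : ∑ i, u i * c i = ∑ i, a * |c i| := le_antisymm hsum (by rw [he']; exact h2)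
  constructor
  · intro i
    exact (Finset.sum_eq_sum_iff_of_le hterm).mp heq i (Finset.mem_univ i)
  · have h3 : a * ∑ i, |c i| = a := by rw [Finset.mul_sum, ← heq, he']
    have h4 := mul_left_cancel₀ (ne_of_gt ha) (h3.trans (mul_one a).symm)
    linarith

/-- zero coordinates off the support condition -/
lemma eq_cross_zero {u : Fin d → ℝ} {a : ℝ} (ha : 0 < a)
    {c : EuclideanSpace ℝ (Fin d)} {i : Fin d} (hlt : |u i| < a)
    (h : u i * c i = a * |c i|) : c i = 0 := by
  by_contra h0
  have h1 : u i * c i ≤ |u i| * |c i| := by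
    calc u i * c i ≤ |u i * c i| := le_abs_self _
      _ = |u i| * |c i| := abs_mul _ _
  have h2 : |u i| * |c i| < a * |c i| := by
    apply mul_lt_mul_of_pos_right hlt
    exact abs_pos.2 h0
  linarith [h, h1, h2]

lemma sign_abs_eq {σc cc : ℝ} (h : σc * cc = |cc|) : σc * |cc| = cc := by
  rcases eq_or_ne cc 0 with h0 | h0
  · simp [h0]
  · have h2 : σc * cc * |cc| = |cc| * |cc| := by rw [h]
    have h3 : |cc| * |cc| = cc * cc := abs_mul_abs_self cc
    have h4 : σc * |cc| * cc = cc * cc := by nlinarith [h2, h3]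
    exact mul_right_cancel₀ h0 h4

lemma mem_simplex (knat : ℕ) (I : Finset (Fin d)) (σ : Fin d → ℝ)
    (c : EuclideanSpace ℝ (Fin d))
    (hzero : ∀ i, i ∉ I → c i = 0) (hsign : ∀ i ∈ I, σ i * c i = |c i|)
    (hsum : ∑ i, |c i| = 1) :
    (knat:ℝ) • c ∈ convexHull ℝ
      {p : EuclideanSpace ℝ (Fin d) | ∃ i ∈ I, p = ((knat:ℝ) * σ i) • EuclideanSpace.single i (1:ℝ)} := by
  have hw : ∀ i ∈ I, (0:ℝ) ≤ |c i| := fun i _ => abs_nonneg _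
  have hwsum : ∑ i ∈ I, |c i| = 1 := by
    rw [← hsum]
    apply Finset.sum_subset (Finset.subset_univ I)
    intro i _ hi
    rw [hzero i hi, abs_zero]
  have hws : (0:ℝ) < ∑ i ∈ I, |c i| := by rw [hwsum]; norm_num
  have hz : ∀ i ∈ I, ((knat:ℝ) * σ i) • EuclideanSpace.single i (1:ℝ) ∈
      {p : EuclideanSpace ℝ (Fin d) | ∃ i ∈ I, p = ((knat:ℝ) * σ i) • EuclideanSpace.single i (1:ℝ)} :=
    fun i hi => ⟨i, hi, rfl⟩
  have hmem := Finset.centerMass_mem_convexHull I hw hws hz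
  have hcm : I.centerMass (fun i => |c i|) (fun i => ((knat:ℝ) * σ i) • EuclideanSpace.single i (1:ℝ))
      = (knat:ℝ) • c := by
    rw [Finset.centerMass, hwsum, inv_one, one_smul]
    ext j
    rw [WithLp.ofLp_sum, Finset.sum_apply]
    have hterm : ∀ i ∈ I, (|c i| • (((knat:ℝ) * σ i) • EuclideanSpace.single i (1:ℝ))) j
        = if i = j then (knat:ℝ) * (σ i * |c i|) else 0 := by
      intro i _
      simp only [PiLp.smul_apply, EuclideanSpace.single_apply, smul_eq_mul, mul_ite, mul_zero, mul_one]
      by_cases h : j = i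
      · simp [h, eq_comm]; ring
      · simp [h, Ne.symm h]
    rw [Finset.sum_congr rfl hterm, Finset.sum_ite_eq']
    by_cases hj : j ∈ I
    · simp only [hj, if_true]
      rw [sign_abs_eq (hsign j hj)]
      rfl
    · simp only [hj, if_false]
      have h : ((knat:ℝ) • c) j = (knat:ℝ) * c j := rfl
      rw [h, hzero j hj, mul_zero]
  rwa [hcm] at hmem

/-! ### dimension bounds -/

lemma vectorSpan_le_ker {F : Set (EuclideanSpace ℝ (Fin d))} {V : Type*} [AddCommGroup V]
    [Module ℝ V] (f : EuclideanSpace ℝ (Fin d) →ₗ[ℝ] V) (c : V)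
    (hF : ∀ x ∈ F, f x = c) : vectorSpan ℝ F ≤ LinearMap.ker f := by
  rw [vectorSpan_def, Submodule.span_le]
  rintro v ⟨x, hx, y, hy, rfl⟩
  simp only [SetLike.mem_coe, LinearMap.mem_ker, vsub_eq_sub, map_sub, hF x hx, hF y hy, sub_self]

lemma finrank_le_ker2 {F : Set (EuclideanSpace ℝ (Fin d))}
    (f g : EuclideanSpace ℝ (Fin d) →ₗ[ℝ] ℝ) (v₁ v₂ : EuclideanSpace ℝ (Fin d))
    (h1 : f v₁ = 1) (h2 : g v₁ = 0) (h3 : g v₂ = 1) (cf cg : ℝ)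
    (hF : ∀ x ∈ F, f x = cf ∧ g x = cg) :
    Module.finrank ℝ (vectorSpan ℝ F) + 2 ≤ d := by
  set φ := f.prod g with hφ
  have hker : vectorSpan ℝ F ≤ LinearMap.ker φ := by
    apply vectorSpan_le_ker φ (cf, cg)
    intro x hx
    have h := hF x hx
    simp [hφ, LinearMap.prod_apply, h.1, h.2, Prod.ext_iff]
  have hsurj : Function.Surjective φ := by
    rintro ⟨α, β⟩
    refine ⟨β • v₂ + (α - β * f v₂) • v₁, ?_⟩
    simp only [hφ, LinearMap.prod_apply, map_add, map_smul, Pi.prod, smul_eq_mul, h1, h2, h3]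
    rw [Prod.ext_iff]
    simp only [Function.prod, h1, h2, h3, Prod.smul_mk, Prod.fst_add, Prod.snd_add, smul_eq_mul, mul_one, mul_zero]
    constructor <;> ring
  have hrange : LinearMap.range φ = ⊤ := LinearMap.range_eq_top.2 hsurj
  have hrn := LinearMap.finrank_range_add_finrank_ker φ
  rw [hrange] at hrn
  have h2' : Module.finrank ℝ (⊤ : Submodule ℝ (ℝ × ℝ)) = 2 := by simp [finrank_top]
  rw [h2'] at hrn
  have hE : Module.finrank ℝ (EuclideanSpace ℝ (Fin d)) = d := finrank_euclideanSpace_fin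
  rw [hE] at hrn
  have hle : Module.finrank ℝ (vectorSpan ℝ F) ≤ Module.finrank ℝ (LinearMap.ker φ) :=
    Submodule.finrank_mono hker
  omega

end FacetAux
section TEST
open Set FacetAux
variable {d : ℕ}

namespace FacetAux

section Good
variable {knat : ℕ} {u : Fin d → ℝ} {a : ℝ} {I : Finset (Fin d)} {σ : Fin d → ℝ}

variable (hk1 : 1 ≤ knat) (ha : 0 < a)
  (hmem : ∀ i ∈ I, u i = σ i * a)
  (hsig : ∀ i ∈ I, σ i = 1 ∨ σ i = -1)
  (hoff : ∀ i ∉ I, u i = 0)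
  (hcard : I.card = knat)

include ha hmem hsig hoff hcard

lemma l1_eq : ∑ i, |u i| = knat * a := by
  have h0 : ∑ i, |u i| = ∑ i ∈ I, |u i| := by
    symm
    apply Finset.sum_subset (Finset.subset_univ I)
    intro i _ hi
    rw [hoff i hi, abs_zero]
  rw [h0]
  have h1 : ∀ i ∈ I, |u i| = a := by
    intro i hi
    rw [hmem i hi]
    rcases hsig i hi with h | h <;> rw [h] <;> simp [abs_of_pos ha, le_of_lt ha]
  rw [Finset.sum_congr rfl h1, Finset.sum_const, hcard, nsmul_eq_mul]

omit hcard in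
lemma abs_u_le : ∀ i, |u i| ≤ a := by
  intro i
  by_cases hi : i ∈ I
  · rw [hmem i hi]
    rcases hsig i hi with h | h <;> rw [h] <;> simp [abs_of_pos ha, le_of_lt ha]
  · rw [hoff i hi, abs_zero]; exact le_of_lt ha

/-- the value of `lfun u` on points of the cube face `G` -/
lemma lfun_on_G {x : EuclideanSpace ℝ (Fin d)} (hx : ∀ i ∈ I, x i = σ i) :
    lfun u x = knat * a := by
  rw [lfun_apply]
  have h0 : ∑ i, u i * x i = ∑ i ∈ I, u i * x i := by
    symm
    apply Finset.sum_subset (Finset.subset_univ I)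
    intro i _ hi
    rw [hoff i hi, zero_mul]
  rw [h0]
  have h1 : ∀ i ∈ I, u i * x i = a := by
    intro i hi
    rw [hmem i hi, hx i hi]
    rcases hsig i hi with h | h <;> rw [h] <;> ring
  rw [Finset.sum_congr rfl h1, Finset.sum_const, hcard, nsmul_eq_mul]

omit hcard in
/-- the value of `lfun u` on the simplex vertices -/
lemma lfun_on_S {i : Fin d} (hi : i ∈ I) :
    lfun u (((knat:ℝ) * σ i) • EuclideanSpace.single i (1:ℝ)) = knat * a := by
  rw [lfun_single, hmem i hi]
  rcases hsig i hi with h | h <;> rw [h] <;> ring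

omit ha hmem hsig hoff hcard in
lemma S_subset_scaled_cross {i : Fin d} (hi : i ∈ I) (hσi : σ i = 1 ∨ σ i = -1) :
    ((knat:ℝ) * σ i) • EuclideanSpace.single i (1:ℝ) ∈ (knat:ℝ) • cross d := by
  refine ⟨σ i • EuclideanSpace.single i (1:ℝ), ?_, ?_⟩
  · show (∑ j, |(σ i • EuclideanSpace.single i (1:ℝ)) j|) ≤ 1
    have h : ∀ j, |(σ i • EuclideanSpace.single i (1:ℝ)) j| = if j = i then |σ i| else 0 := by
      intro j
      have h2 : (σ i • EuclideanSpace.single i (1:ℝ)) j = σ i * (if j = i then 1 else 0) := by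
        simp [EuclideanSpace.single_apply]
      rw [h2]
      by_cases h3 : j = i <;> simp [h3]
    simp only [h, Finset.sum_ite_eq', Finset.mem_univ, if_true]
    rcases hσi with h | h <;> rw [h] <;> norm_num
  · show (knat:ℝ) • (σ i • EuclideanSpace.single i (1:ℝ)) = _
    rw [smul_smul]

/-- main face identity, ⊇ direction ingredients:
    `conv (G ∪ S)` is inside the level set. -/
lemma conv_subset_level :
    convexHull ℝ
        ({x ∈ hcube d | ∀ i ∈ I, x i = σ i} ∪
          {p | ∃ i ∈ I, p = ((knat:ℝ) * σ i) • EuclideanSpace.single i (1:ℝ)}) ⊆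
      {x ∈ convexHull ℝ ((knat:ℝ) • cross d ∪ hcube d) | lfun u x = knat * a} := by
  apply convexHull_min
  · rintro p (⟨hp1, hp2⟩ | ⟨i, hi, rfl⟩)
    · exact ⟨subset_convexHull ℝ _ (mem_union_right _ hp1), lfun_on_G ha hmem hsig hoff hcard hp2⟩
    · exact ⟨subset_convexHull ℝ _ (mem_union_left _ (S_subset_scaled_cross hi (hsig i hi))),
        lfun_on_S ha hmem hsig hoff hi⟩
  · exact (convex_convexHull ℝ _).inter (convex_hyperplane ⟨(lfun u).map_add, (lfun u).map_smul⟩ _)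

lemma level_subset_conv (hk1 : 1 ≤ knat) :
    {x ∈ convexHull ℝ ((knat:ℝ) • cross d ∪ hcube d) | lfun u x = knat * a} ⊆
      convexHull ℝ
        ({x ∈ hcube d | ∀ i ∈ I, x i = σ i} ∪
          {p | ∃ i ∈ I, p = ((knat:ℝ) * σ i) • EuclideanSpace.single i (1:ℝ)}) := by
  have hk0 : (0:ℝ) < knat := by exact_mod_cast hk1
  rintro x ⟨hxP, hxl⟩
  obtain ⟨a', ha', b, hb, α, β, hα, hβ, hαβ, hx⟩ :=
    mem_join (convex_cross.smul _) convex_hcube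
      (cross_nonempty.smul_set) hcube_nonempty hxP
  obtain ⟨c, hc, rfl⟩ := ha'
  -- values
  have hlc : lfun u ((knat:ℝ) • c) = knat * lfun u c := by rw [map_smul, smul_eq_mul]
  have hlcle : lfun u ((knat:ℝ) • c) ≤ knat * a := by
    rw [hlc]
    exact mul_le_mul_of_nonneg_left (lfun_le_cross ha.le (abs_u_le ha hmem hsig hoff) hc) hk0.le
  have hlble : lfun u b ≤ knat * a := by
    rw [← l1_eq ha hmem hsig hoff hcard]
    exact lfun_le_cube hb
  have hxval : α * lfun u ((knat:ℝ) • c) + β * lfun u b = knat * a := by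
    rw [← hxl, ← hx]
    simp only [map_add, map_smul, smul_eq_mul]
  -- G membership when β > 0
  have hGmem : lfun u b = knat * a → b ∈ {x ∈ hcube d | ∀ i ∈ I, x i = σ i} := by
    intro hbv
    refine ⟨hb, fun i hi => ?_⟩
    have h1 := eq_cube hb (by rw [hbv, l1_eq ha hmem hsig hoff hcard]) i
    rw [hmem i hi] at h1
    have hane : a ≠ 0 := ne_of_gt ha
    have hσabs : |σ i * a| = a := by
      rcases hsig i hi with h | h <;> rw [h] <;> simp [abs_of_pos ha]
    rw [hσabs] at h1
    have hsq : σ i * σ i = 1 := by rcases hsig i hi with h | h <;> rw [h] <;> norm_num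
    have h1' : a * b i = a * σ i := by linear_combination σ i * h1 - a * b i * hsq
    exact mul_left_cancel₀ hane h1'
  -- simplex membership when α > 0
  have hSmem : lfun u ((knat:ℝ) • c) = knat * a → (knat:ℝ) • c ∈ convexHull ℝ
      {p : EuclideanSpace ℝ (Fin d) | ∃ i ∈ I, p = ((knat:ℝ) * σ i) • EuclideanSpace.single i (1:ℝ)} := by
    intro hcv
    have hlcv : lfun u c = a := by
      rw [hlc] at hcv
      exact mul_left_cancel₀ (ne_of_gt hk0) hcv
    obtain ⟨hper, hsum⟩ := eq_cross ha (abs_u_le ha hmem hsig hoff) hc hlcv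
    apply mem_simplex knat I σ c
    · intro i hi
      have := hper i
      rw [hoff i hi, zero_mul] at this
      have : a * |c i| = 0 := this.symm
      have h2 : |c i| = 0 := by
        rcases mul_eq_zero.1 this with h | h
        · exact absurd h (ne_of_gt ha)
        · exact h
      exact abs_eq_zero.1 h2
    · intro i hi
      have h1 := hper i
      rw [hmem i hi] at h1
      have h2 : a * (σ i * c i) = a * |c i| := by linear_combination h1
      exact mul_left_cancel₀ (ne_of_gt ha) h2
    · exact hsum
  -- now combine
  set G := {x ∈ hcube d | ∀ i ∈ I, x i = σ i}
  set S := {p : EuclideanSpace ℝ (Fin d) | ∃ i ∈ I, p = ((knat:ℝ) * σ i) • EuclideanSpace.single i (1:ℝ)}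
  rcases eq_or_lt_of_le hα with hα0 | hαpos
  · -- α = 0, x = b
    have hβ1 : β = 1 := by linarith
    have hxb : x = b := by rw [← hx, ← hα0, hβ1]; simp
    have hbv : lfun u b = knat * a := by
      rw [← hxval, ← hα0, hβ1]; ring
    rw [hxb]
    exact subset_convexHull ℝ _ (mem_union_left _ (hGmem hbv))
  rcases eq_or_lt_of_le hβ with hβ0 | hβpos
  · -- β = 0, x = k•c
    have hα1 : α = 1 := by linarith
    have hxc : x = (knat:ℝ) • c := by rw [← hx, ← hβ0, hα1]; simp
    have hcv : lfun u ((knat:ℝ) • c) = knat * a := by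
      rw [← hxval, ← hβ0, hα1]; ring
    rw [hxc]
    exact convexHull_mono (subset_union_right) (hSmem hcv)
  · -- both positive: both at max
    have hsplit : α * ((knat:ℝ) * a) + β * ((knat:ℝ) * a) = (knat:ℝ) * a := by
      rw [← add_mul, hαβ, one_mul]
    have hcv : lfun u ((knat:ℝ) • c) = knat * a := by
      by_contra hne
      have hlt : lfun u ((knat:ℝ) • c) < knat * a := lt_of_le_of_ne hlcle hne
      have t1 := mul_le_mul_of_nonneg_left hlble hβ
      have t2 := mul_lt_mul_of_pos_left hlt hαpos
      linarith
    have hbv : lfun u b = knat * a := by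
      by_contra hne
      have hlt : lfun u b < knat * a := lt_of_le_of_ne hlble hne
      have t1 := mul_lt_mul_of_pos_left hlt hβpos
      have t2 := mul_le_mul_of_nonneg_left hlcle hα
      linarith
    have h1 : (knat:ℝ) • c ∈ convexHull ℝ (G ∪ S) :=
      convexHull_mono (subset_union_right) (hSmem hcv)
    have h2 : b ∈ convexHull ℝ (G ∪ S) :=
      subset_convexHull ℝ _ (mem_union_left _ (hGmem hbv))
    rw [← hx]
    exact (convex_convexHull ℝ _) h1 h2 hαpos.le hβpos.le hαβ

lemma face_good (hk1 : 1 ≤ knat) :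
    {x ∈ convexHull ℝ ((knat:ℝ) • cross d ∪ hcube d) | lfun u x = knat * a} =
      convexHull ℝ
        ({x ∈ hcube d | ∀ i ∈ I, x i = σ i} ∪
          {p | ∃ i ∈ I, p = ((knat:ℝ) * σ i) • EuclideanSpace.single i (1:ℝ)}) :=
  le_antisymm (level_subset_conv ha hmem hsig hoff hcard hk1)
    (conv_subset_level ha hmem hsig hoff hcard)

end Good
end FacetAux
end TEST
section TEST2
open Set FacetAux
namespace FacetAux
variable {d : ℕ}

section Good2
variable {knat : ℕ} {u : Fin d → ℝ} {a : ℝ} {I : Finset (Fin d)} {σ : Fin d → ℝ}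

/-- The corner of the cube adapted to the face data. -/
def basept (I : Finset (Fin d)) (σ : Fin d → ℝ) : EuclideanSpace ℝ (Fin d) :=
  WithLp.toLp 2 (fun j => if j ∈ I then σ j else 1)

lemma basept_mem_G (hsig : ∀ i ∈ I, σ i = 1 ∨ σ i = -1) :
    basept I σ ∈ {x ∈ hcube d | ∀ i ∈ I, x i = σ i} := by
  constructor
  · intro j
    show |if j ∈ I then σ j else 1| ≤ 1
    by_cases hj : j ∈ I
    · rw [if_pos hj]
      rcases hsig j hj with h | h <;> rw [h] <;> norm_num
    · rw [if_neg hj]; norm_num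
  · intro i hi
    show (if i ∈ I then σ i else 1) = σ i
    rw [if_pos hi]

lemma flipped_mem_G {j : Fin d} (hj : j ∉ I) (hsig : ∀ i ∈ I, σ i = 1 ∨ σ i = -1) :
    WithLp.toLp 2 (Function.update (basept I σ).ofLp j (-1)) ∈ {x ∈ hcube d | ∀ i ∈ I, x i = σ i} := by
  constructor
  · intro i
    show |Function.update (basept I σ).ofLp j (-1) i| ≤ 1
    rcases eq_or_ne i j with h | h
    · rw [h, Function.update_self]; norm_num
    · rw [Function.update_of_ne h]
      exact (basept_mem_G hsig).1 i
  · intro i hi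
    show Function.update (basept I σ).ofLp j (-1) i = σ i
    have h : i ≠ j := fun h => hj (h ▸ hi)
    rw [Function.update_of_ne h]
    exact (basept_mem_G hsig).2 i hi

lemma single_mem_span {j : Fin d} (hj : j ∉ I) (hsig : ∀ i ∈ I, σ i = 1 ∨ σ i = -1)
    {S : Set (EuclideanSpace ℝ (Fin d))} :
    EuclideanSpace.single j (1:ℝ) ∈
      vectorSpan ℝ (convexHull ℝ ({x ∈ hcube d | ∀ i ∈ I, x i = σ i} ∪ S)) := by
  set F := convexHull ℝ ({x ∈ hcube d | ∀ i ∈ I, x i = σ i} ∪ S)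
  have h1 : basept I σ ∈ F := subset_convexHull ℝ _ (mem_union_left _ (basept_mem_G hsig))
  have h2 : WithLp.toLp 2 (Function.update (basept I σ).ofLp j (-1)) ∈ F :=
    subset_convexHull ℝ _ (mem_union_left _ (flipped_mem_G hj hsig))
  have h3 : basept I σ -ᵥ WithLp.toLp 2 (Function.update (basept I σ).ofLp j (-1)) ∈ vectorSpan ℝ F :=
    vsub_mem_vectorSpan ℝ h1 h2
  have h4 : EuclideanSpace.single j (1:ℝ)
      = (2:ℝ)⁻¹ • (basept I σ -ᵥ WithLp.toLp 2 (Function.update (basept I σ).ofLp j (-1))) := by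
    ext i
    have h5 : ((2:ℝ)⁻¹ • (basept I σ -ᵥ WithLp.toLp 2 (Function.update (basept I σ).ofLp j (-1)))) i
        = (2:ℝ)⁻¹ * (basept I σ i - Function.update (basept I σ).ofLp j (-1) i) := rfl
    rw [h5, EuclideanSpace.single_apply]
    rcases eq_or_ne i j with h | h
    · rw [h, if_pos rfl, Function.update_self]
      show (1:ℝ) = 2⁻¹ * ((if j ∈ I then σ j else 1) - (-1))
      rw [if_neg hj]
      norm_num
    · rw [if_neg h, Function.update_of_ne h]
      norm_num
  rw [h4]
  exact Submodule.smul_mem _ _ h3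

end Good2
end FacetAux
end TEST2
section TEST3
open Set FacetAux
namespace FacetAux
variable {d : ℕ}
section Good3
variable {knat : ℕ} {u : Fin d → ℝ} {a : ℝ} {I : Finset (Fin d)} {σ : Fin d → ℝ}

lemma ker_le_span (hk1 : 1 ≤ knat) (ha : 0 < a)
    (hmem : ∀ i ∈ I, u i = σ i * a)
    (hsig : ∀ i ∈ I, σ i = 1 ∨ σ i = -1)
    (hoff : ∀ i ∉ I, u i = 0)
    (hcard : I.card = knat) :
    LinearMap.ker (lfun u) ≤ vectorSpan ℝ (convexHull ℝ
      ({x ∈ hcube d | ∀ i ∈ I, x i = σ i} ∪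
        {p | ∃ i ∈ I, p = ((knat:ℝ) * σ i) • EuclideanSpace.single i (1:ℝ)})) := by
  have hk0 : (knat:ℝ) ≠ 0 := by
    have : (0:ℝ) < knat := by exact_mod_cast hk1
    exact ne_of_gt this
  obtain ⟨i₀, hi₀⟩ : ∃ i₀, i₀ ∈ I := Finset.card_pos.1 (by omega : 0 < I.card)
  set G := {x ∈ hcube d | ∀ i ∈ I, x i = σ i} with hG
  set S := {p : EuclideanSpace ℝ (Fin d) |
    ∃ i ∈ I, p = ((knat:ℝ) * σ i) • EuclideanSpace.single i (1:ℝ)} with hS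
  set F := convexHull ℝ (G ∪ S) with hF
  -- simplex difference vectors
  have hwmem : ∀ j ∈ I, ((knat:ℝ) * σ j) • EuclideanSpace.single j (1:ℝ)
      - ((knat:ℝ) * σ i₀) • EuclideanSpace.single i₀ (1:ℝ) ∈ vectorSpan ℝ F := by
    intro j hj
    have h1 : ((knat:ℝ) * σ j) • EuclideanSpace.single j (1:ℝ) ∈ F :=
      subset_convexHull ℝ _ (mem_union_right _ ⟨j, hj, rfl⟩)
    have h2 : ((knat:ℝ) * σ i₀) • EuclideanSpace.single i₀ (1:ℝ) ∈ F :=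
      subset_convexHull ℝ _ (mem_union_right _ ⟨i₀, hi₀, rfl⟩)
    exact vsub_mem_vectorSpan ℝ h1 h2
  intro v hv
  rw [LinearMap.mem_ker] at hv
  -- the I-signed sum of v vanishes
  have hv' : ∑ j ∈ I, σ j * v j = 0 := by
    have h1 : ∑ j, u j * v j = 0 := hv
    have h2 : ∑ j, u j * v j = ∑ j ∈ I, u j * v j := by
      symm
      apply Finset.sum_subset (Finset.subset_univ I)
      intro i _ hi
      rw [hoff i hi, zero_mul]
    have h3 : ∑ j ∈ I, u j * v j = a * ∑ j ∈ I, σ j * v j := by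
      rw [Finset.mul_sum]
      refine Finset.sum_congr rfl fun j hj => ?_
      rw [hmem j hj]; ring
    have h4 : a * ∑ j ∈ I, σ j * v j = 0 := by rw [← h3, ← h2, h1]
    rcases mul_eq_zero.1 h4 with h | h
    · exact absurd h (ne_of_gt ha)
    · exact h
  -- decomposition of v
  set g : Fin d → EuclideanSpace ℝ (Fin d) := fun j =>
    if j ∈ I then ((knat:ℝ) * σ j) • EuclideanSpace.single j (1:ℝ)
      - ((knat:ℝ) * σ i₀) • EuclideanSpace.single i₀ (1:ℝ)
    else EuclideanSpace.single j (1:ℝ) with hg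
  set coef : Fin d → ℝ := fun j => if j ∈ I then σ j * v j / knat else v j with hcoef
  have hgmem : ∀ j, g j ∈ vectorSpan ℝ F := by
    intro j
    simp only [hg]
    by_cases hj : j ∈ I
    · rw [if_pos hj]; exact hwmem j hj
    · rw [if_neg hj]; exact single_mem_span hj hsig
  have hdecomp : v = ∑ j, coef j • g j := by
    ext i
    rw [WithLp.ofLp_sum, Finset.sum_apply]
    have hterm : ∀ j, (coef j • g j) i =
        (if j ∈ I then (σ j * v j / knat) *
            ((if i = j then (knat:ℝ) * σ j else 0) - (if i = i₀ then (knat:ℝ) * σ i₀ else 0))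
          else 0)
        + (if j ∈ Iᶜ then v j * (if i = j then 1 else 0) else 0) := by
      intro j
      have happ : (coef j • g j) i = coef j * (g j i) := rfl
      rw [happ]
      by_cases hj : j ∈ I
      · have hgj : g j i = (if i = j then (knat:ℝ) * σ j else 0)
            - (if i = i₀ then (knat:ℝ) * σ i₀ else 0) := by
          simp only [hg, hj, if_true]
          have h6 : (((knat:ℝ) * σ j) • EuclideanSpace.single j (1:ℝ)
              - ((knat:ℝ) * σ i₀) • EuclideanSpace.single i₀ (1:ℝ)) i
              = ((knat:ℝ) * σ j) * (EuclideanSpace.single j (1:ℝ) i)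
                - ((knat:ℝ) * σ i₀) * (EuclideanSpace.single i₀ (1:ℝ) i) := rfl
          rw [h6, EuclideanSpace.single_apply, EuclideanSpace.single_apply]
          by_cases h7 : i = j <;> by_cases h8 : i = i₀ <;> simp [h7, h8]
        have hcj : coef j = σ j * v j / knat := by simp only [hcoef, hj, if_true]
        rw [hgj, hcj, if_pos hj, if_neg (fun h => (Finset.mem_compl.1 h) hj), add_zero]
      · have hgj : g j i = if i = j then (1:ℝ) else 0 := by
          simp only [hg, hj, if_false]
          exact EuclideanSpace.single_apply j 1 i
        have hcj : coef j = v j := by simp only [hcoef, hj, if_false]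
        rw [hgj, hcj, if_neg hj, if_pos (Finset.mem_compl.2 hj), zero_add]
    rw [Finset.sum_congr rfl (fun j _ => hterm j), Finset.sum_add_distrib]
    rw [Finset.sum_ite_mem, Finset.sum_ite_mem, Finset.univ_inter, Finset.univ_inter]
    have hsplit : ∀ j ∈ I, (σ j * v j / knat) *
        ((if i = j then (knat:ℝ) * σ j else 0) - (if i = i₀ then (knat:ℝ) * σ i₀ else 0))
        = (if i = j then (σ j * v j / knat) * ((knat:ℝ) * σ j) else 0)
          - (σ j * v j / knat) * (if i = i₀ then (knat:ℝ) * σ i₀ else 0) := by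
      intro j _
      by_cases h7 : i = j <;> simp [h7, mul_sub]
    rw [Finset.sum_congr rfl hsplit, Finset.sum_sub_distrib, Finset.sum_ite_eq]
    have hzero2 : ∑ j ∈ I, (σ j * v j / knat) * (if i = i₀ then (knat:ℝ) * σ i₀ else 0)
        = 0 := by
      rw [← Finset.sum_mul]
      have h9 : ∑ j ∈ I, σ j * v j / knat = 0 := by
        rw [← Finset.sum_div, hv']; simp
      rw [h9, zero_mul]
    rw [hzero2, sub_zero]
    have hterm2 : ∀ j ∈ Iᶜ, v j * (if i = j then (1:ℝ) else 0) = if i = j then v j else 0 := by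
      intro j _
      by_cases h7 : i = j <;> simp [h7]
    rw [Finset.sum_congr rfl hterm2, Finset.sum_ite_eq]
    by_cases hi : i ∈ I
    · rw [if_pos hi, if_neg (fun h => (Finset.mem_compl.1 h) hi)]
      have hsq : σ i * σ i = 1 := by rcases hsig i hi with h | h <;> rw [h] <;> norm_num
      have h10 : σ i * v i / (knat:ℝ) * ((knat:ℝ) * σ i) = (σ i * σ i) * v i := by
        field_simp
      rw [h10, hsq, one_mul]
      ring
    · rw [if_neg hi, if_pos (Finset.mem_compl.2 hi)]
      simp
  rw [hdecomp]
  exact Submodule.sum_mem _ fun j _ => Submodule.smul_mem _ _ (hgmem j)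

end Good3
end FacetAux
end TEST3
section TEST4
open Set FacetAux
namespace FacetAux
variable {d : ℕ}
section Good4
variable {knat : ℕ} {u : Fin d → ℝ} {a : ℝ} {I : Finset (Fin d)} {σ : Fin d → ℝ}

lemma lfun_surj {i₀ : Fin d} (h : u i₀ ≠ 0) : Function.Surjective (lfun u) := by
  intro α
  refine ⟨(α / u i₀) • EuclideanSpace.single i₀ (1:ℝ), ?_⟩
  rw [lfun_single]
  field_simp

lemma finrank_ker_lfun {i₀ : Fin d} (h : u i₀ ≠ 0) :
    Module.finrank ℝ (LinearMap.ker (lfun u)) = d - 1 := by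
  have hrn := LinearMap.finrank_range_add_finrank_ker (lfun u)
  rw [LinearMap.range_eq_top.2 (lfun_surj h)] at hrn
  have h1 : Module.finrank ℝ (⊤ : Submodule ℝ ℝ) = 1 := by simp [finrank_top]
  rw [h1, finrank_euclideanSpace_fin] at hrn
  have hd : 1 ≤ d := by
    by_contra hd
    have : d = 0 := by omega
    subst this
    exact absurd i₀.2 (by omega)
  omega

lemma span_good (hk1 : 1 ≤ knat) (ha : 0 < a)
    (hmem : ∀ i ∈ I, u i = σ i * a)
    (hsig : ∀ i ∈ I, σ i = 1 ∨ σ i = -1)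
    (hoff : ∀ i ∉ I, u i = 0)
    (hcard : I.card = knat) :
    Module.finrank ℝ (vectorSpan ℝ (convexHull ℝ
      ({x ∈ hcube d | ∀ i ∈ I, x i = σ i} ∪
        {p | ∃ i ∈ I, p = ((knat:ℝ) * σ i) • EuclideanSpace.single i (1:ℝ)}))) = d - 1 := by
  obtain ⟨i₀, hi₀⟩ : ∃ i₀, i₀ ∈ I := Finset.card_pos.1 (by omega : 0 < I.card)
  have hune : u i₀ ≠ 0 := by
    rw [hmem i₀ hi₀]
    rcases hsig i₀ hi₀ with h | h <;> rw [h] <;> simp [ne_of_gt ha, ne_of_lt (neg_neg_iff_pos.2 ha)]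
  have hupper : vectorSpan ℝ (convexHull ℝ
      ({x ∈ hcube d | ∀ i ∈ I, x i = σ i} ∪
        {p | ∃ i ∈ I, p = ((knat:ℝ) * σ i) • EuclideanSpace.single i (1:ℝ)}))
      ≤ LinearMap.ker (lfun u) := by
    apply vectorSpan_le_ker (lfun u) ((knat:ℝ) * a)
    intro x hx
    exact (conv_subset_level ha hmem hsig hoff hcard hx).2
  have hlower := ker_le_span hk1 ha hmem hsig hoff hcard
  have heq : vectorSpan ℝ (convexHull ℝ
      ({x ∈ hcube d | ∀ i ∈ I, x i = σ i} ∪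
        {p | ∃ i ∈ I, p = ((knat:ℝ) * σ i) • EuclideanSpace.single i (1:ℝ)}))
      = LinearMap.ker (lfun u) := le_antisymm hupper hlower
  rw [heq, finrank_ker_lfun hune]

/-- upper bound of `lfun u` over the whole polytope -/
lemma lfun_le_hull {m : ℝ} (han : 0 ≤ a) (hu : ∀ i, |u i| ≤ a)
    (h1 : (knat:ℝ) * a ≤ m) (h2 : ∑ i, |u i| ≤ m) :
    ∀ y ∈ convexHull ℝ ((knat:ℝ) • cross d ∪ hcube d), lfun u y ≤ m := by
  intro y hy
  have hsub : convexHull ℝ ((knat:ℝ) • cross d ∪ hcube d) ⊆ {y | lfun u y ≤ m} := by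
    apply convexHull_min
    · rintro p (⟨c, hc, rfl⟩ | hp)
      · show lfun u ((knat:ℝ) • c) ≤ m
        rw [map_smul, smul_eq_mul]
        calc (knat:ℝ) * lfun u c ≤ (knat:ℝ) * a := by
              apply mul_le_mul_of_nonneg_left (lfun_le_cross han hu hc)
              positivity
          _ ≤ m := h1
      · exact le_trans (lfun_le_cube hp) h2
    · exact convex_halfSpace_le ⟨(lfun u).map_add, (lfun u).map_smul⟩ m
  exact hsub hy

/-- exposed set, rewritten as a level set of the functional, for any function -/
lemma exposed_level {P : Set (EuclideanSpace ℝ (Fin d))} (f : EuclideanSpace ℝ (Fin d) → ℝ)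
    {x₀ : EuclideanSpace ℝ (Fin d)} (hx₀ : x₀ ∈ P) (hsup : ∀ y ∈ P, f y ≤ f x₀) :
    {x ∈ P | ∀ y ∈ P, f y ≤ f x} = {x ∈ P | f x = f x₀} := by
  ext x
  constructor
  · rintro ⟨hxP, hx⟩
    exact ⟨hxP, le_antisymm (hsup x hxP) (hx x₀ hx₀)⟩
  · rintro ⟨hxP, hx⟩
    exact ⟨hxP, fun y hy => (hsup y hy).trans hx.ge⟩

end Good4
end FacetAux
end TEST4
section TEST5
open Set FacetAux
namespace FacetAux
variable {d : ℕ}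
section Good5
variable {knat : ℕ} {u : Fin d → ℝ}

lemma u_eq_sgn_abs (u : Fin d → ℝ) (i : Fin d) : u i = sgn u i * |u i| := by
  have h1 := sgn_mul u i
  have h2 := sgn_sq u i
  linear_combination sgn u i * h1 - u i * h2

lemma forcing {lc lb m α β : ℝ} (hlc : lc ≤ m) (hlb : lb ≤ m) (hα : 0 ≤ α) (hβ : 0 ≤ β)
    (hαβ : α + β = 1) (hsum : α * lc + β * lb = m) :
    (0 < α → lc = m) ∧ (0 < β → lb = m) := by
  have hm : α * m + β * m = m := by rw [← add_mul, hαβ, one_mul]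
  constructor
  · intro hαpos
    by_contra hne
    have hlt : lc < m := lt_of_le_of_ne hlc hne
    have t1 := mul_le_mul_of_nonneg_left hlb hβ
    have t2 := mul_lt_mul_of_pos_left hlt hαpos
    linarith
  · intro hβpos
    by_contra hne
    have hlt : lb < m := lt_of_le_of_ne hlb hne
    have t1 := mul_le_mul_of_nonneg_left hlc hα
    have t2 := mul_lt_mul_of_pos_left hlt hβpos
    linarith

lemma mem_P_decomp (u : Fin d → ℝ) {x : EuclideanSpace ℝ (Fin d)}
    (hx : x ∈ convexHull ℝ ((knat:ℝ) • cross d ∪ hcube d)) :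
    ∃ c ∈ cross d, ∃ b ∈ hcube d, ∃ α β : ℝ, 0 ≤ α ∧ 0 ≤ β ∧ α + β = 1 ∧
      α • ((knat:ℝ) • c) + β • b = x ∧
      lfun u x = α * lfun u ((knat:ℝ) • c) + β * lfun u b ∧
      lfun u ((knat:ℝ) • c) = (knat:ℝ) * lfun u c := by
  obtain ⟨a', ha', b, hb, α, β, hα, hβ, hαβ, hxeq⟩ :=
    mem_join (convex_cross.smul _) convex_hcube cross_nonempty.smul_set hcube_nonempty hx
  obtain ⟨c, hc, rfl⟩ := ha'
  refine ⟨c, hc, b, hb, α, β, hα, hβ, hαβ, hxeq, ?_, by rw [map_smul, smul_eq_mul]⟩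
  rw [← hxeq]
  simp only [map_add, map_smul, smul_eq_mul]

end Good5
end FacetAux
end TEST5
namespace FacetAux
open Set
variable {d : ℕ}

lemma exposed_level' {P : Set (EuclideanSpace ℝ (Fin d))} {f : EuclideanSpace ℝ (Fin d) → ℝ}
    {x₀ : EuclideanSpace ℝ (Fin d)} {m : ℝ} (hx₀ : x₀ ∈ P) (hval : f x₀ = m)
    (hsup : ∀ y ∈ P, f y ≤ m) :
    {x ∈ P | ∀ y ∈ P, f y ≤ f x} = {x ∈ P | f x = m} := by
  ext x
  constructor
  · rintro ⟨hxP, hx⟩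
    exact ⟨hxP, le_antisymm (hsup x hxP) (hval ▸ hx x₀ hx₀)⟩
  · rintro ⟨hxP, hx⟩
    exact ⟨hxP, fun y hy => (hsup y hy).trans hx.ge⟩

end FacetAux

open Set FacetAux in
/-- For integer `k`, the facets of `k·ρ_{d,k}` are exactly the convex hulls of a
`(d-k)`-dimensional face `G` of the hypercube `γ_d` together with the `(k-1)`-dimensional
regular simplex whose vertices are the `k` points `k σ_i e_i` pulled from the centers of
the `k` facets of `γ_d` incident to `G`. -/
theorem facets_of_scaled_rho_int (d k : ℕ) (hd : 1 ≤ d) (hk1 : 1 ≤ k) (hkd : k ≤ d)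
    (F : Set (EuclideanSpace ℝ (Fin d))) :
    (IsExposed ℝ ((k : ℝ) • rho d (k : ℝ)) F ∧ F.Nonempty ∧
        Module.finrank ℝ (vectorSpan ℝ F) = d - 1) ↔
      ∃ (I : Finset (Fin d)) (σ : Fin d → ℝ), I.card = k ∧
        (∀ i ∈ I, σ i = 1 ∨ σ i = -1) ∧
        F = convexHull ℝ
          ({x ∈ hcube d | ∀ i ∈ I, x i = σ i} ∪
            {p | ∃ i ∈ I, p = ((k : ℝ) * σ i) • EuclideanSpace.single i (1 : ℝ)}) := by
  classical
  have hk0 : ((k:ℕ):ℝ) ≠ 0 := Nat.cast_ne_zero.2 (by omega)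
  rw [scaled_rho (k:ℝ) hk0]
  set P := convexHull ℝ ((k:ℝ) • cross d ∪ hcube d) with hPdef
  constructor
  · rintro ⟨hexp, hne, hdim⟩
    obtain ⟨l, hFl⟩ := hexp hne
    set u : Fin d → ℝ := fun i => l (EuclideanSpace.single i (1:ℝ)) with hu
    have hlx : ∀ x, l x = lfun u x := fun x => by rw [hu]; exact clm_eq_lfun l x
    have hFl' : F = {x ∈ P | ∀ y ∈ P, lfun u y ≤ lfun u x} := by
      rw [hFl]
      ext x
      simp only [Set.mem_setOf_eq, hlx]
    have hNE : Nonempty (Fin d) := ⟨⟨0, by omega⟩⟩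
    set A := Finset.univ.sup' Finset.univ_nonempty (fun i => |u i|) with hA
    have hAle : ∀ i, |u i| ≤ A := by
      intro i
      rw [hA]
      exact Finset.le_sup' (fun j => |u j|) (Finset.mem_univ i)
    obtain ⟨i₀, -, hi₀A⟩ := Finset.exists_mem_eq_sup' (Finset.univ_nonempty) (fun i => |u i|)
    rw [← hA] at hi₀A
    by_cases hu0 : ∀ i, u i = 0
    · -- the functional is zero: F = P has dimension d, contradiction
      exfalso
      have hz : ∀ x : EuclideanSpace ℝ (Fin d), lfun u x = 0 := by
        intro x
        rw [lfun_apply]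
        exact Finset.sum_eq_zero fun i _ => by rw [hu0 i, zero_mul]
      have hF_eq_P : F = P := by
        rw [hFl']
        ext x
        simp [hz]
      have hsingle : ∀ j, EuclideanSpace.single j (1:ℝ) ∈ vectorSpan ℝ P := by
        intro j
        have h1 := single_mem_span (I := (∅ : Finset (Fin d))) (σ := fun _ => (1:ℝ))
          (S := (k:ℝ) • cross d) (j := j) (by simp) (by simp)
        have hset : ({x ∈ hcube d | ∀ i ∈ (∅ : Finset (Fin d)), x i = (fun _ => (1:ℝ)) i} ∪
            (k:ℝ) • cross d) = ((k:ℝ) • cross d ∪ hcube d) := by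
          ext x
          simp [or_comm]
        rw [hset] at h1
        exact h1
      have htop : vectorSpan ℝ P = ⊤ := by
        rw [eq_top_iff]
        intro v _
        rw [eucl_repr v]
        exact Submodule.sum_mem _ fun j _ => Submodule.smul_mem _ _ (hsingle j)
      rw [hF_eq_P, htop, finrank_top, finrank_euclideanSpace_fin] at hdim
      omega
    · push_neg at hu0
      obtain ⟨iz, hiz⟩ := hu0
      have hApos : 0 < A := lt_of_lt_of_le (abs_pos.2 hiz) (hAle iz)
      have hui₀ : u i₀ ≠ 0 := by
        rw [← abs_pos, ← hi₀A]; exact hApos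
      rcases lt_trichotomy (∑ i, |u i|) ((k:ℝ) * A) with hlt | heqc | hgt
      · -- ℓ¹ norm < k·A : the face is a cross-polytope face, dimension too small
        exfalso
        have hp₀mem : ((k:ℝ) * sgn u i₀) • EuclideanSpace.single i₀ (1:ℝ) ∈ P :=
          subset_convexHull ℝ _ (mem_union_left _
            (S_subset_scaled_cross (I := (Finset.univ : Finset (Fin d)))
              (Finset.mem_univ i₀) (sgn_pm u i₀)))
        have hp₀val : lfun u (((k:ℝ) * sgn u i₀) • EuclideanSpace.single i₀ (1:ℝ))
            = (k:ℝ) * A := by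
          rw [lfun_single, hi₀A, ← sgn_mul u i₀]; ring
        have hsup : ∀ y ∈ P, lfun u y ≤ (k:ℝ) * A := lfun_le_hull hApos.le hAle le_rfl hlt.le
        have hFlev : F = {x ∈ P | lfun u x = (k:ℝ) * A} := by
          rw [hFl', exposed_level' hp₀mem hp₀val hsup]
        obtain ⟨j₀, hj₀⟩ : ∃ j₀, |u j₀| < A := by
          by_contra hno
          push_neg at hno
          have hsum : ∑ i, |u i| = d * A := by
            rw [Finset.sum_congr rfl (fun i _ => le_antisymm (hAle i) (hno i)),
              Finset.sum_const, Finset.card_univ, Fintype.card_fin, nsmul_eq_mul]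
          have hdA : (k:ℝ) * A ≤ d * A :=
            mul_le_mul_of_nonneg_right (by exact_mod_cast hkd) hApos.le
          linarith
        have hij : i₀ ≠ j₀ := by
          intro h
          rw [h] at hi₀A
          exact absurd hi₀A.symm (ne_of_lt hj₀)
        have hconst : ∀ x ∈ F, lfun u x = (k:ℝ) * A ∧ lfun (sing j₀ 1) x = 0 := by
          intro x hx
          rw [hFlev] at hx
          obtain ⟨hxP, hxv⟩ := hx
          refine ⟨hxv, ?_⟩
          obtain ⟨c, hc, b, hb, α, β, hα, hβ, hαβ, hxeq, hxval, hlc⟩ := mem_P_decomp u hxP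
          have hlcle : lfun u ((k:ℝ) • c) ≤ (k:ℝ) * A := by
            rw [hlc]
            exact mul_le_mul_of_nonneg_left (lfun_le_cross hApos.le hAle hc) (by positivity)
          have hlb_lt : lfun u b < (k:ℝ) * A := lt_of_le_of_lt (lfun_le_cube hb) hlt
          have hforce := forcing hlcle hlb_lt.le hα hβ hαβ (by rw [← hxval, hxv])
          have hβ0 : β = 0 := by
            by_contra hβne
            have hβpos : 0 < β := lt_of_le_of_ne hβ (Ne.symm hβne)
            have := hforce.2 hβpos
            linarith
          have hα1 : α = 1 := by linarith
          have hxc : x = (k:ℝ) • c := by rw [← hxeq, hβ0, hα1]; simp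
          have hcv : lfun u c = A := by
            have h1 : lfun u ((k:ℝ) • c) = (k:ℝ) * A := by rw [← hxc]; exact hxv
            rw [hlc] at h1
            exact mul_left_cancel₀ hk0 h1
          obtain ⟨hper, -⟩ := eq_cross hApos hAle hc hcv
          have hcj₀ : c j₀ = 0 := eq_cross_zero hApos hj₀ (hper j₀)
          rw [lfun_sing, hxc]
          have h2 : ((k:ℝ) • c) j₀ = (k:ℝ) * c j₀ := rfl
          rw [h2, hcj₀]
          ring
        have hcontra := finrank_le_ker2 (lfun u) (lfun (sing j₀ 1))
          ((1 / u i₀) • EuclideanSpace.single i₀ (1:ℝ))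
          ((1:ℝ) • EuclideanSpace.single j₀ (1:ℝ))
          (by rw [lfun_single]; field_simp)
          (by rw [lfun_single]
              show (1 / u i₀) * (if i₀ = j₀ then (1:ℝ) else 0) = 0
              rw [if_neg hij]; ring)
          (by rw [lfun_single]
              show (1:ℝ) * (if j₀ = j₀ then (1:ℝ) else 0) = 1
              rw [if_pos rfl]; ring)
          ((k:ℝ) * A) 0 hconst
        omega
      · -- equality case
        by_cases hsupp : ∀ j, u j ≠ 0 → |u j| = A
        · -- good case: produce the facet data
          set I := Finset.filter (fun i => u i ≠ 0) Finset.univ with hI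
          have hmem : ∀ i ∈ I, u i = sgn u i * A := by
            intro i hi
            have hne : u i ≠ 0 := (Finset.mem_filter.1 hi).2
            rw [u_eq_sgn_abs u i, hsupp i hne]
          have hsig' : ∀ i ∈ I, sgn u i = 1 ∨ sgn u i = -1 := fun i _ => sgn_pm u i
          have hoff : ∀ i ∉ I, u i = 0 := by
            intro i hi
            by_contra h
            exact hi (Finset.mem_filter.2 ⟨Finset.mem_univ i, h⟩)
          have hcard : I.card = k := by
            have h1 : ∑ i, |u i| = I.card * A := by
              rw [show ∑ i, |u i| = ∑ i ∈ I, |u i| from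
                (Finset.sum_subset (Finset.subset_univ I)
                  (fun i _ hi => by rw [hoff i hi, abs_zero])).symm]
              rw [Finset.sum_congr rfl (fun i hi => hsupp i (Finset.mem_filter.1 hi).2),
                Finset.sum_const, nsmul_eq_mul]
            have h2 : (I.card : ℝ) * A = (k:ℝ) * A := by rw [← h1, heqc]
            have h3 : (I.card : ℝ) = (k:ℝ) := mul_right_cancel₀ (ne_of_gt hApos) h2
            exact_mod_cast h3
          have hbase := basept_mem_G (I := I) (σ := sgn u) hsig'
          have hbaseP : basept I (sgn u) ∈ P :=
            subset_convexHull ℝ _ (mem_union_right _ hbase.1)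
          have hbval : lfun u (basept I (sgn u)) = (k:ℝ) * A :=
            lfun_on_G hApos hmem hsig' hoff hcard hbase.2
          have hsup : ∀ y ∈ P, lfun u y ≤ (k:ℝ) * A := lfun_le_hull hApos.le hAle le_rfl heqc.le
          have hface := face_good hApos hmem hsig' hoff hcard hk1
          refine ⟨I, sgn u, hcard, hsig', ?_⟩
          rw [hFl', exposed_level' hbaseP hbval hsup, hface]
        · -- a support coordinate below the max: dimension too small
          exfalso
          push_neg at hsupp
          obtain ⟨j₁, hj₁ne, hj₁A⟩ := hsupp
          have hj₁lt : |u j₁| < A := lt_of_le_of_ne (hAle j₁) hj₁A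
          obtain ⟨j₂, hj₂j₁, hj₂ne, hj₂lt⟩ : ∃ j₂, j₂ ≠ j₁ ∧ u j₂ ≠ 0 ∧ |u j₂| < A := by
            by_contra hno
            push_neg at hno
            set M := Finset.filter (fun j => |u j| = A) Finset.univ with hM
            have hj₁M : j₁ ∉ M := by simp [hM, hj₁A]
            have hMsub : M ⊆ Finset.univ.erase j₁ := by
              intro j hj
              rw [Finset.mem_erase]
              exact ⟨fun h => hj₁M (h ▸ hj), Finset.mem_univ j⟩
            have hzero : ∀ j ∈ Finset.univ.erase j₁, j ∉ M → |u j| = 0 := by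
              intro j hj hjM
              have hjne : j ≠ j₁ := (Finset.mem_erase.1 hj).1
              by_cases hz : u j = 0
              · rw [hz, abs_zero]
              · exact absurd
                  (le_antisymm (hAle j) (hno j hjne hz))
                  (fun h => hjM (Finset.mem_filter.2 ⟨Finset.mem_univ j, h⟩))
            have h5 : ∑ j ∈ Finset.univ.erase j₁, |u j| = ∑ j ∈ M, |u j| :=
              (Finset.sum_subset hMsub hzero).symm
            have h6 : ∑ j ∈ M, |u j| = M.card * A := by
              rw [Finset.sum_congr rfl (fun j hj => (Finset.mem_filter.1 hj).2),
                Finset.sum_const, nsmul_eq_mul]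
            have hsum : ∑ i, |u i| = |u j₁| + M.card * A := by
              rw [← Finset.add_sum_erase _ _ (Finset.mem_univ j₁), h5, h6]
            have hj₁pos : 0 < |u j₁| := abs_pos.2 hj₁ne
            -- (k - M.card) * A = |u j₁|, with 0 < |u j₁| < A; contradiction for integers
            have heq2 : ((k:ℝ) - M.card) * A = |u j₁| := by
              rw [sub_mul]
              rw [hsum] at heqc
              linarith
            have hlt1 : (M.card : ℝ) < (k:ℝ) := by
              by_contra hkm
              push_neg at hkm
              have : ((k:ℝ) - M.card) * A ≤ 0 :=
                mul_nonpos_of_nonpos_of_nonneg (by linarith) hApos.le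
              linarith
            have hlt2 : (k:ℝ) < (M.card : ℝ) + 1 := by
              by_contra hkm
              push_neg at hkm
              have h7 : A ≤ ((k:ℝ) - M.card) * A := le_mul_of_one_le_left hApos.le (by linarith)
              linarith
            have hn1 : M.card < k := by exact_mod_cast hlt1
            have hn2 : k < M.card + 1 := by exact_mod_cast hlt2
            omega
          have hp₀mem : ((k:ℝ) * sgn u i₀) • EuclideanSpace.single i₀ (1:ℝ) ∈ P :=
            subset_convexHull ℝ _ (mem_union_left _
              (S_subset_scaled_cross (I := (Finset.univ : Finset (Fin d)))
                (Finset.mem_univ i₀) (sgn_pm u i₀)))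
          have hp₀val : lfun u (((k:ℝ) * sgn u i₀) • EuclideanSpace.single i₀ (1:ℝ))
              = (k:ℝ) * A := by
            rw [lfun_single, hi₀A, ← sgn_mul u i₀]; ring
          have hsup : ∀ y ∈ P, lfun u y ≤ (k:ℝ) * A := lfun_le_hull hApos.le hAle le_rfl heqc.le
          have hFlev : F = {x ∈ P | lfun u x = (k:ℝ) * A} := by
            rw [hFl', exposed_level' hp₀mem hp₀val hsup]
          have hi₀j₁ : i₀ ≠ j₁ := by
            intro h; rw [h] at hi₀A; exact absurd hi₀A.symm (ne_of_lt hj₁lt)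
          have hi₀j₂ : i₀ ≠ j₂ := by
            intro h; rw [h] at hi₀A; exact absurd hi₀A.symm (ne_of_lt hj₂lt)
          set g := lfun (sing j₁ (sgn u j₁)) - lfun (sing j₂ (sgn u j₂)) with hg
          have hgapp : ∀ x, g x = sgn u j₁ * x j₁ - sgn u j₂ * x j₂ := by
            intro x
            rw [hg, LinearMap.sub_apply, lfun_sing, lfun_sing]
          have hconst : ∀ x ∈ F, lfun u x = (k:ℝ) * A ∧ g x = 0 := by
            intro x hx
            rw [hFlev] at hx
            obtain ⟨hxP, hxv⟩ := hx
            refine ⟨hxv, ?_⟩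
            obtain ⟨c, hc, b, hb, α, β, hα, hβ, hαβ, hxeq, hxval, hlc⟩ := mem_P_decomp u hxP
            have hlcle : lfun u ((k:ℝ) • c) ≤ (k:ℝ) * A := by
              rw [hlc]
              exact mul_le_mul_of_nonneg_left (lfun_le_cross hApos.le hAle hc) (by positivity)
            have hlble : lfun u b ≤ (k:ℝ) * A := le_trans (lfun_le_cube hb) heqc.le
            have hforce := forcing hlcle hlble hα hβ hαβ (by rw [← hxval, hxv])
            have hgx : g x = α * g ((k:ℝ) • c) + β * g b := by
              rw [← hxeq]
              simp only [map_add, map_smul, smul_eq_mul]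
            have hpart1 : α * g ((k:ℝ) • c) = 0 := by
              rcases eq_or_lt_of_le hα with h0 | hpos
              · rw [← h0, zero_mul]
              · have hcv : lfun u c = A := by
                  have h1 := hforce.1 hpos
                  rw [hlc] at h1
                  exact mul_left_cancel₀ hk0 h1
                obtain ⟨hper, -⟩ := eq_cross hApos hAle hc hcv
                have hc1 : c j₁ = 0 := eq_cross_zero hApos hj₁lt (hper j₁)
                have hc2 : c j₂ = 0 := eq_cross_zero hApos hj₂lt (hper j₂)
                have : g ((k:ℝ) • c) = 0 := by
                  rw [hgapp]
                  have e1 : ((k:ℝ) • c) j₁ = (k:ℝ) * c j₁ := rfl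
                  have e2 : ((k:ℝ) • c) j₂ = (k:ℝ) * c j₂ := rfl
                  rw [e1, e2, hc1, hc2]
                  ring
                rw [this, mul_zero]
            have hpart2 : β * g b = 0 := by
              rcases eq_or_lt_of_le hβ with h0 | hpos
              · rw [← h0, zero_mul]
              · have hbv : lfun u b = ∑ i, |u i| := by rw [hforce.2 hpos, heqc]
                have hcube := eq_cube hb hbv
                have hb1 : b j₁ = sgn u j₁ := eq_sgn_of_mul_eq_abs hj₁ne (hcube j₁)
                have hb2 : b j₂ = sgn u j₂ := eq_sgn_of_mul_eq_abs hj₂ne (hcube j₂)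
                have : g b = 0 := by
                  rw [hgapp, hb1, hb2, sgn_sq, sgn_sq]
                  ring
                rw [this, mul_zero]
            rw [hgx, hpart1, hpart2, add_zero]
          have hcontra := finrank_le_ker2 (lfun u) g
            ((1 / u i₀) • EuclideanSpace.single i₀ (1:ℝ))
            ((sgn u j₁) • EuclideanSpace.single j₁ (1:ℝ))
            (by rw [lfun_single]; field_simp)
            (by rw [hg, LinearMap.sub_apply, lfun_single, lfun_single]
                show (1 / u i₀) * (if i₀ = j₁ then sgn u j₁ else 0)
                  - (1 / u i₀) * (if i₀ = j₂ then sgn u j₂ else 0) = 0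
                rw [if_neg hi₀j₁, if_neg hi₀j₂]; ring)
            (by rw [hg, LinearMap.sub_apply, lfun_single, lfun_single]
                show sgn u j₁ * (if j₁ = j₁ then sgn u j₁ else 0)
                  - sgn u j₁ * (if j₁ = j₂ then sgn u j₂ else 0) = 1
                rw [if_pos rfl, if_neg (fun h => hj₂j₁ h.symm), sgn_sq]; ring)
            ((k:ℝ) * A) 0 hconst
          omega
      · -- ℓ¹ norm > k·A : the face is a cube face, dimension too small
        exfalso
        set bs : EuclideanSpace ℝ (Fin d) := WithLp.toLp 2 (fun j => sgn u j) with hbs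
        have hbsmem : bs ∈ hcube d := by
          intro i
          show |sgn u i| ≤ 1
          rcases sgn_pm u i with h | h <;> rw [h] <;> norm_num
        have hbsval : lfun u bs = ∑ i, |u i| := by
          rw [lfun_apply]
          refine Finset.sum_congr rfl fun i _ => ?_
          have : bs i = sgn u i := rfl
          rw [this, mul_comm]
          exact sgn_mul u i
        have hbsP : bs ∈ P := subset_convexHull ℝ _ (mem_union_right _ hbsmem)
        have hsup : ∀ y ∈ P, lfun u y ≤ ∑ i, |u i| := lfun_le_hull hApos.le hAle hgt.le le_rfl
        have hFlev : F = {x ∈ P | lfun u x = ∑ i, |u i|} := by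
          rw [hFl', exposed_level' hbsP hbsval hsup]
        obtain ⟨i₂, hi₂ne, hi₂⟩ : ∃ i₂, i₂ ≠ i₀ ∧ u i₂ ≠ 0 := by
          by_contra hno
          push_neg at hno
          have hsum : ∑ i, |u i| = |u i₀| :=
            Finset.sum_eq_single i₀ (fun b _ hb => by rw [hno b hb, abs_zero])
              (fun h => absurd (Finset.mem_univ i₀) h)
          have hkA : A ≤ (k:ℝ) * A := le_mul_of_one_le_left hApos.le (by exact_mod_cast hk1)
          rw [hsum, ← hi₀A] at hgt
          linarith
        have hconst : ∀ x ∈ F,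
            lfun (sing i₀ (sgn u i₀)) x = 1 ∧ lfun (sing i₂ (sgn u i₂)) x = 1 := by
          intro x hx
          rw [hFlev] at hx
          obtain ⟨hxP, hxv⟩ := hx
          obtain ⟨c, hc, b, hb, α, β, hα, hβ, hαβ, hxeq, hxval, hlc⟩ := mem_P_decomp u hxP
          have hlcle : lfun u ((k:ℝ) • c) ≤ ∑ i, |u i| := by
            rw [hlc]
            exact le_trans
              (mul_le_mul_of_nonneg_left (lfun_le_cross hApos.le hAle hc) (by positivity))
              hgt.le
          have hlble : lfun u b ≤ ∑ i, |u i| := lfun_le_cube hb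
          have hforce := forcing hlcle hlble hα hβ hαβ (by rw [← hxval, hxv])
          have hα0 : α = 0 := by
            by_contra hαne
            have hαpos : 0 < α := lt_of_le_of_ne hα (Ne.symm hαne)
            have h1 := hforce.1 hαpos
            have h2 : lfun u ((k:ℝ) • c) ≤ (k:ℝ) * A := by
              rw [hlc]
              exact mul_le_mul_of_nonneg_left (lfun_le_cross hApos.le hAle hc) (by positivity)
            linarith
          have hβ1 : β = 1 := by linarith
          have hxb : x = b := by rw [← hxeq, hα0, hβ1]; simp
          have hbv : lfun u b = ∑ i, |u i| := by rw [← hxb]; exact hxv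
          have hcube := eq_cube hb hbv
          have hx₀ : x i₀ = sgn u i₀ := by rw [hxb]; exact eq_sgn_of_mul_eq_abs hui₀ (hcube i₀)
          have hx₂ : x i₂ = sgn u i₂ := by rw [hxb]; exact eq_sgn_of_mul_eq_abs hi₂ (hcube i₂)
          rw [lfun_sing, lfun_sing, hx₀, hx₂, sgn_sq, sgn_sq]
          exact ⟨rfl, rfl⟩
        have hcontra := finrank_le_ker2 (lfun (sing i₀ (sgn u i₀))) (lfun (sing i₂ (sgn u i₂)))
          ((sgn u i₀) • EuclideanSpace.single i₀ (1:ℝ))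
          ((sgn u i₂) • EuclideanSpace.single i₂ (1:ℝ))
          (by rw [lfun_single]
              show sgn u i₀ * (if i₀ = i₀ then sgn u i₀ else 0) = 1
              rw [if_pos rfl]; exact sgn_sq u i₀)
          (by rw [lfun_single]
              show sgn u i₀ * (if i₀ = i₂ then sgn u i₂ else 0) = 0
              rw [if_neg (fun h => hi₂ne h.symm)]; ring)
          (by rw [lfun_single]
              show sgn u i₂ * (if i₂ = i₂ then sgn u i₂ else 0) = 1
              rw [if_pos rfl]; exact sgn_sq u i₂)
          1 1 hconst
        omega
  · rintro ⟨I, σ, hcard, hsig, hFeq⟩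
    set u : Fin d → ℝ := fun i => if i ∈ I then σ i else 0 with hu
    have hmem : ∀ i ∈ I, u i = σ i * 1 := fun i hi => by simp [hu, hi]
    have hoff : ∀ i ∉ I, u i = 0 := fun i hi => by simp [hu, hi]
    have h01 : (0:ℝ) < 1 := one_pos
    have habs := abs_u_le h01 hmem hsig hoff
    have hl1 := l1_eq h01 hmem hsig hoff hcard
    have hbase := basept_mem_G (I := I) (σ := σ) hsig
    have hbaseP : basept I σ ∈ P := subset_convexHull ℝ _ (mem_union_right _ hbase.1)
    have hbval : lfun u (basept I σ) = (k:ℝ) * 1 := lfun_on_G h01 hmem hsig hoff hcard hbase.2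
    have hsup : ∀ y ∈ P, lfun u y ≤ (k:ℝ) * 1 := lfun_le_hull h01.le habs le_rfl hl1.le
    have hface := face_good (a := 1) h01 hmem hsig hoff hcard hk1
    have hkey : {x ∈ P | ∀ y ∈ P, lfun u y ≤ lfun u x} = convexHull ℝ
        ({x ∈ hcube d | ∀ i ∈ I, x i = σ i} ∪
          {p | ∃ i ∈ I, p = ((k:ℝ) * σ i) • EuclideanSpace.single i (1:ℝ)}) := by
      rw [exposed_level' hbaseP hbval hsup, hface]
    refine ⟨?_, ?_, ?_⟩
    · intro _
      refine ⟨LinearMap.toContinuousLinearMap (lfun u), ?_⟩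
      have hco : ⇑(LinearMap.toContinuousLinearMap (lfun u)) = ⇑(lfun u) :=
        LinearMap.coe_toContinuousLinearMap' (lfun u)
      rw [hFeq, ← hkey]
      ext x
      simp only [Set.mem_setOf_eq, hco]
    · rw [hFeq]
      exact ⟨basept I σ, subset_convexHull ℝ _ (mem_union_left _ hbase)⟩
    · rw [hFeq]
      exact span_good hk1 h01 hmem hsig hoff hcard
end
end

section
/- Let d ≥ 1 and let k be an integer with 1 ≤ k ≤ d. The number of (d−1)-dimensional exposed faces (facets) of ρ_{d,k} equals 2^k · binom(d,k). -/
open scoped Pointwise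

noncomputable section

variable {d : ℕ}

abbrev Esp (d : ℕ) := EuclideanSpace ℝ (Fin d)

/-- The linear functional `x ↦ ∑ u i * x i`. -/
def lin (u : Fin d → ℝ) : Esp d →ₗ[ℝ] ℝ where
  toFun x := ∑ i, u i * x i
  map_add' x y := by
    simp only [PiLp.add_apply, mul_add, Finset.sum_add_distrib]
  map_smul' c x := by
    simp only [PiLp.smul_apply, smul_eq_mul, RingHom.id_apply, Finset.mul_sum]
    exact Finset.sum_congr rfl fun i _ => by ring

@[simp] lemma lin_apply (u : Fin d → ℝ) (x : Esp d) : lin u x = ∑ i, u i * x i := rfl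

def linC (u : Fin d → ℝ) : Esp d →L[ℝ] ℝ := (lin u).toContinuousLinearMap

@[simp] lemma linC_apply (u : Fin d → ℝ) (x : Esp d) : linC u x = ∑ i, u i * x i := rfl

/-- every CLM on `Esp d` is of this form -/
lemma clm_eq_lin (l : Esp d →L[ℝ] ℝ) (x : Esp d) :
    l x = ∑ i, (l (EuclideanSpace.single i 1)) * x i := by
  have hx : x = ∑ i, x i • EuclideanSpace.single i (1:ℝ) := by
    ext j
    rw [WithLp.ofLp_sum, Fintype.sum_apply]
    simp [EuclideanSpace.single_apply]
  conv_lhs => rw [hx]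
  rw [map_sum]
  congr 1; funext i
  rw [map_smul]
  simp [mul_comm]

lemma convex_cross : Convex ℝ (cross d) := by
  intro x hx y hy a b ha hb hab
  simp only [cross, Set.mem_setOf_eq] at *
  calc ∑ i, |(a • x + b • y) i| ≤ ∑ i, (a * |x i| + b * |y i|) := by
        apply Finset.sum_le_sum
        intro i _
        simp only [PiLp.add_apply, PiLp.smul_apply, smul_eq_mul]
        calc |a * x i + b * y i| ≤ |a * x i| + |b * y i| := abs_add_le _ _
          _ = a * |x i| + b * |y i| := by rw [abs_mul, abs_mul, abs_of_nonneg ha, abs_of_nonneg hb]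
    _ = a * (∑ i, |x i|) + b * (∑ i, |y i|) := by rw [Finset.sum_add_distrib, Finset.mul_sum, Finset.mul_sum]
    _ ≤ a * 1 + b * 1 := by
        gcongr
    _ = 1 := by linarith

lemma mem_shcube {k : ℝ} (hk : 0 < k) (x : Esp d) :
    x ∈ (1 / k) • hcube d ↔ ∀ i, |x i| ≤ 1 / k := by
  constructor
  · rintro ⟨y, hy, rfl⟩ i
    simp only [PiLp.smul_apply, smul_eq_mul]
    rw [abs_mul, abs_of_nonneg (by positivity : (0:ℝ) ≤ 1/k)]
    have := hy i
    calc (1/k) * |y i| ≤ (1/k) * 1 := by gcongr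
      _ = 1/k := mul_one _
  · intro h
    refine ⟨k • x, fun i => ?_, ?_⟩
    · simp only [PiLp.smul_apply, smul_eq_mul, abs_mul, abs_of_nonneg hk.le]
      calc k * |x i| ≤ k * (1/k) := by gcongr; exact h i
        _ = 1 := by field_simp
    · show (1 / k) • k • x = x
      rw [smul_smul]
      field_simp
      exact one_smul _ _

lemma convex_shcube {k : ℝ} (hk : 0 < k) : Convex ℝ ((1 / k) • hcube d) := by
  intro x hx y hy a b ha hb hab
  rw [mem_shcube hk] at *
  intro i
  simp only [PiLp.add_apply, PiLp.smul_apply, smul_eq_mul]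
  calc |a * x i + b * y i| ≤ |a * x i| + |b * y i| := abs_add_le _ _
    _ = a * |x i| + b * |y i| := by rw [abs_mul, abs_mul, abs_of_nonneg ha, abs_of_nonneg hb]
    _ ≤ a * (1/k) + b * (1/k) := by gcongr; exacts [hx i, hy i]
    _ = 1/k := by rw [← add_mul, hab, one_mul]

lemma zero_mem_cross (hd : 1 ≤ d) : (0 : Esp d) ∈ cross d := by
  simp [cross]

lemma cross_nonempty (hd : 1 ≤ d) : (cross d).Nonempty := ⟨0, by simp [cross]⟩

lemma shcube_nonempty {k : ℝ} (hk : 0 < k) : ((1 / k) • hcube d).Nonempty := by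
  refine ⟨0, ?_⟩
  rw [mem_shcube hk]
  intro i
  simp
  exact hk.le

lemma mem_rho_iff {k : ℝ} (hk : 0 < k) (hd : 1 ≤ d) (x : Esp d) :
    x ∈ rho d k ↔ ∃ a ∈ cross d, ∃ b ∈ (1 / k) • hcube d,
      ∃ p q : ℝ, 0 ≤ p ∧ 0 ≤ q ∧ p + q = 1 ∧ p • a + q • b = x := by
  rw [rho, convexHull_union (cross_nonempty hd) (shcube_nonempty hk),
    (convex_cross).convexHull_eq, (convex_shcube hk).convexHull_eq, mem_convexJoin]
  simp only [segment, Set.mem_setOf_eq]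


lemma cross_subset_rho {k : ℝ} : cross d ⊆ rho d k :=
  (Set.subset_union_left).trans (subset_convexHull ℝ _)

lemma shcube_subset_rho {k : ℝ} : (1 / k) • hcube d ⊆ rho d k :=
  (Set.subset_union_right).trans (subset_convexHull ℝ _)

lemma sum_le_cross {u : Fin d → ℝ} {x : Esp d} {M : ℝ} (hM : ∀ i, |u i| ≤ M)
    (hM0 : 0 ≤ M) (hx : ∑ i, |x i| ≤ 1) : ∑ i, u i * x i ≤ M := by
  calc ∑ i, u i * x i ≤ ∑ i, |u i| * |x i| := by
        apply Finset.sum_le_sum; intro i _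
        rw [← abs_mul]; exact le_abs_self _
    _ ≤ ∑ i, M * |x i| := by
        apply Finset.sum_le_sum; intro i _
        exact mul_le_mul_of_nonneg_right (hM i) (abs_nonneg _)
    _ = M * ∑ i, |x i| := by rw [Finset.mul_sum]
    _ ≤ M * 1 := mul_le_mul_of_nonneg_left hx hM0
    _ = M := mul_one _

lemma sum_le_cube {u : Fin d → ℝ} {x : Esp d} {M k : ℝ} (hk : 0 < k)
    (hsum : ∑ i, |u i| ≤ k * M) (hx : ∀ i, |x i| ≤ 1 / k) : ∑ i, u i * x i ≤ M := by
  calc ∑ i, u i * x i ≤ ∑ i, |u i| * (1 / k) := by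
        apply Finset.sum_le_sum; intro i _
        calc u i * x i ≤ |u i * x i| := le_abs_self _
          _ = |u i| * |x i| := abs_mul _ _
          _ ≤ |u i| * (1 / k) := mul_le_mul_of_nonneg_left (hx i) (abs_nonneg _)
    _ = (∑ i, |u i|) * (1 / k) := by rw [Finset.sum_mul]
    _ ≤ (k * M) * (1 / k) := by
        apply mul_le_mul_of_nonneg_right hsum
        positivity
    _ = M := by field_simp

lemma rho_le {u : Fin d → ℝ} {M k : ℝ} (hk : 0 < k) (hd : 1 ≤ d) (hM0 : 0 ≤ M)
    (h1 : ∀ i, |u i| ≤ M) (h2 : ∑ i, |u i| ≤ k * M) :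
    ∀ x ∈ rho d k, ∑ i, u i * x i ≤ M := by
  intro x hx
  rw [mem_rho_iff hk hd] at hx
  obtain ⟨a, ha, b, hb, p, q, hp, hq, hpq, rfl⟩ := hx
  rw [mem_shcube hk] at hb
  have : ∑ i, u i * (p • a + q • b) i = p * (∑ i, u i * a i) + q * (∑ i, u i * b i) := by
    simp only [PiLp.add_apply, PiLp.smul_apply, smul_eq_mul, Finset.mul_sum,
      ← Finset.sum_add_distrib]
    apply Finset.sum_congr rfl; intro i _; ring
  rw [this]
  calc p * (∑ i, u i * a i) + q * (∑ i, u i * b i) ≤ p * M + q * M := by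
        gcongr
        · exact sum_le_cross h1 hM0 ha
        · exact sum_le_cube hk h2 hb
    _ = M := by rw [← add_mul, hpq, one_mul]

lemma cross_eq_case {u : Fin d → ℝ} {x : Esp d} {M : ℝ} (hM : ∀ i, |u i| ≤ M)
    (hM0 : 0 < M) (hx : ∑ i, |x i| ≤ 1) (heq : ∑ i, u i * x i = M) :
    ∀ j, |u j| ≠ M → x j = 0 := by
  have h1 : M ≤ ∑ i, |u i| * |x i| := by
    rw [← heq]
    apply Finset.sum_le_sum; intro i _
    rw [← abs_mul]; exact le_abs_self _
  have h2 : ∑ i, |u i| * |x i| ≤ M * ∑ i, |x i| := by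
    rw [Finset.mul_sum]
    apply Finset.sum_le_sum; intro i _
    exact mul_le_mul_of_nonneg_right (hM i) (abs_nonneg _)
  have hT : M * ∑ i, |x i| ≤ M := by
    calc M * ∑ i, |x i| ≤ M * 1 := mul_le_mul_of_nonneg_left hx hM0.le
      _ = M := mul_one _
  have hSum : ∑ i, (M - |u i|) * |x i| = 0 := by
    have e1 : ∑ i, |u i| * |x i| = M := le_antisymm (h2.trans hT) h1
    have e2 : M * ∑ i, |x i| = M := le_antisymm hT (h1.trans h2)
    have : ∑ i, (M - |u i|) * |x i| = M * (∑ i, |x i|) - ∑ i, |u i| * |x i| := by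
      rw [Finset.mul_sum, ← Finset.sum_sub_distrib]
      apply Finset.sum_congr rfl; intro i _; ring
    rw [this, e1, e2, sub_self]
  intro j hj
  have hterm : (M - |u j|) * |x j| = 0 := by
    have := (Finset.sum_eq_zero_iff_of_nonneg (fun i _ => by
      have h := hM i
      have h2 := abs_nonneg (x i)
      nlinarith [abs_nonneg (u i)])).1 hSum j (Finset.mem_univ j)
    exact this
  have : |u j| < M := lt_of_le_of_ne (hM j) hj
  have : |x j| = 0 := by
    rcases mul_eq_zero.1 hterm with h | h
    · linarith
    · exact h
  exact abs_eq_zero.1 this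

lemma cube_eq_case {u : Fin d → ℝ} {x : Esp d} {M k : ℝ} (hk : 0 < k)
    (hsum : ∑ i, |u i| = k * M) (hx : ∀ i, |x i| ≤ 1 / k)
    (heq : ∑ i, u i * x i = M) : ∀ j, u j * x j = |u j| / k := by
  have hSum : ∑ i, (|u i| / k - u i * x i) = 0 := by
    rw [Finset.sum_sub_distrib, ← Finset.sum_div, hsum, heq]
    field_simp
    ring
  intro j
  have hterm : |u j| / k - u j * x j = 0 := by
    refine (Finset.sum_eq_zero_iff_of_nonneg (fun i _ => ?_)).1 hSum j (Finset.mem_univ j)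
    have : u i * x i ≤ |u i| / k := by
      calc u i * x i ≤ |u i| * |x i| := by rw [← abs_mul]; exact le_abs_self _
        _ ≤ |u i| * (1 / k) := mul_le_mul_of_nonneg_left (hx i) (abs_nonneg _)
        _ = |u i| / k := by ring
    linarith
  linarith

lemma vectorSpan_le_ker {V : Type*} [AddCommGroup V] [Module ℝ V] {F : Set (Esp d)}
    (f : Esp d →ₗ[ℝ] V) {c : V} (h : ∀ x ∈ F, f x = c) :
    vectorSpan ℝ F ≤ LinearMap.ker f := by
  rw [vectorSpan_def]
  apply Submodule.span_le.2
  rintro v hv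
  rw [Set.mem_vsub] at hv
  obtain ⟨x, hx, y, hy, rfl⟩ := hv
  rw [SetLike.mem_coe, LinearMap.mem_ker]
  have : x -ᵥ y = x - y := rfl
  rw [this, map_sub, h x hx, h y hy, sub_self]

lemma range_lin_top {u : Fin d → ℝ} {i0 : Fin d} (h : u i0 ≠ 0) :
    LinearMap.range (lin u) = ⊤ := by
  rw [LinearMap.range_eq_top]
  intro c
  refine ⟨(c / u i0) • EuclideanSpace.single i0 (1:ℝ), ?_⟩
  rw [map_smul]
  simp only [lin_apply, smul_eq_mul]
  rw [Finset.sum_eq_single i0]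
  · simp [EuclideanSpace.single_apply]
    field_simp
  · intro b _ hb
    simp [EuclideanSpace.single_apply, hb]
  · simp

lemma finrank_ker_lin {u : Fin d → ℝ} {i0 : Fin d} (h : u i0 ≠ 0) :
    Module.finrank ℝ (LinearMap.ker (lin u)) = d - 1 := by
  have h1 := LinearMap.finrank_range_add_finrank_ker (lin u)
  rw [range_lin_top h, finrank_top, Module.finrank_self, finrank_euclideanSpace_fin] at h1
  omega

lemma surj_of_two {f : Esp d →ₗ[ℝ] ℝ × ℝ} {x1 x2 : Esp d}
    (h : (f x1).1 * (f x2).2 - (f x1).2 * (f x2).1 ≠ 0) : Function.Surjective f := by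
  rintro ⟨a, b⟩
  set p1 := (f x1).1
  set q1 := (f x1).2
  set p2 := (f x2).1
  set q2 := (f x2).2
  set D := p1 * q2 - q1 * p2 with hD
  refine ⟨((a * q2 - b * p2) / D) • x1 + ((b * p1 - a * q1) / D) • x2, ?_⟩
  rw [map_add, map_smul, map_smul]
  have hDne : D ≠ 0 := h
  apply Prod.ext
  · show ((a * q2 - b * p2) / D) * p1 + ((b * p1 - a * q1) / D) * p2 = a
    field_simp
    ring
  · show ((a * q2 - b * p2) / D) * q1 + ((b * p1 - a * q1) / D) * q2 = b
    field_simp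
    ring

lemma finrank_le_of_two {F : Set (Esp d)} {u v : Fin d → ℝ} {c1 c2 : ℝ}
    (h1 : ∀ x ∈ F, lin u x = c1) (h2 : ∀ x ∈ F, lin v x = c2)
    (hsurj : Function.Surjective ((lin u).prod (lin v))) :
    Module.finrank ℝ (vectorSpan ℝ F) ≤ d - 2 := by
  have hker : vectorSpan ℝ F ≤ LinearMap.ker ((lin u).prod (lin v)) := by
    apply vectorSpan_le_ker _ (c := (c1, c2))
    intro x hx
    simp [LinearMap.prod_apply, h1 x hx, h2 x hx]
  have hkd : Module.finrank ℝ (LinearMap.ker ((lin u).prod (lin v))) = d - 2 := by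
    have hr := LinearMap.finrank_range_add_finrank_ker ((lin u).prod (lin v))
    rw [LinearMap.range_eq_top.2 hsurj, finrank_top, finrank_euclideanSpace_fin] at hr
    have : Module.finrank ℝ (ℝ × ℝ) = 2 := by
      simp [Module.finrank_prod]
    rw [this] at hr
    omega
  exact (Submodule.finrank_mono hker).trans_eq hkd

def Ff (d : ℕ) (k : ℝ) (ε : Fin d → ℝ) : Set (Esp d) := {x ∈ rho d k | ∑ i, ε i * x i = 1}

def sgnset (d k : ℕ) : Set (Fin d → ℝ) :=
  {ε | (∀ i, ε i = 1 ∨ ε i = -1 ∨ ε i = 0) ∧ (Finset.univ.filter fun i => ε i ≠ 0).card = k}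

section parts

variable {k : ℕ}

lemma eps_abs {ε : Fin d → ℝ} (he : ∀ i, ε i = 1 ∨ ε i = -1 ∨ ε i = 0) (i : Fin d) :
    |ε i| = if ε i = 0 then 0 else 1 := by
  rcases he i with h | h | h <;> simp [h]

lemma eps_sq {ε : Fin d → ℝ} (he : ∀ i, ε i = 1 ∨ ε i = -1 ∨ ε i = 0) (i : Fin d) :
    ε i * ε i = |ε i| := by
  rcases he i with h | h | h <;> simp [h] <;> norm_num

lemma eps_abs_le {ε : Fin d → ℝ} (he : ∀ i, ε i = 1 ∨ ε i = -1 ∨ ε i = 0) (i : Fin d) :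
    |ε i| ≤ 1 := by
  rcases he i with h | h | h <;> simp [h]

lemma eps_sum {ε : Fin d → ℝ} (hε : ε ∈ sgnset d k) : ∑ i, |ε i| = (k : ℝ) := by
  obtain ⟨he, hc⟩ := hε
  calc ∑ i, |ε i| = ∑ i, (if ε i ≠ 0 then (1:ℝ) else 0) := by
        apply Finset.sum_congr rfl
        intro i _
        rw [eps_abs he i]
        by_cases h : ε i = 0 <;> simp [h]
    _ = ((Finset.univ.filter fun i => ε i ≠ 0).card : ℝ) := by
        rw [Finset.sum_boole]
    _ = (k : ℝ) := by rw [hc]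

lemma eps_exists_ne {ε : Fin d → ℝ} (hk1 : 1 ≤ k) (hε : ε ∈ sgnset d k) :
    ∃ i0, ε i0 ≠ 0 := by
  obtain ⟨he, hc⟩ := hε
  have : (Finset.univ.filter fun i => ε i ≠ 0).Nonempty := by
    rw [← Finset.card_pos, hc]; omega
  obtain ⟨i0, hi0⟩ := this
  exact ⟨i0, (Finset.mem_filter.1 hi0).2⟩

lemma rho_le_one {ε : Fin d → ℝ} (hd : 1 ≤ d) (hk1 : 1 ≤ k) (hε : ε ∈ sgnset d k) :
    ∀ x ∈ rho d (k : ℝ), ∑ i, ε i * x i ≤ 1 := by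
  have hk : (0:ℝ) < k := by exact_mod_cast hk1
  apply rho_le hk hd zero_le_one (eps_abs_le hε.1)
  rw [eps_sum hε, mul_one]

/-- the cross vertex attaining the maximum -/
lemma single_mem_Ff {ε : Fin d → ℝ} (hd : 1 ≤ d) (hk1 : 1 ≤ k) (hε : ε ∈ sgnset d k)
    {i0 : Fin d} (hi0 : ε i0 ≠ 0) :
    EuclideanSpace.single i0 (ε i0) ∈ Ff d (k:ℝ) ε := by
  have habs : |ε i0| = 1 := by rw [eps_abs hε.1]; simp [hi0]
  constructor
  · apply cross_subset_rho
    show ∑ i, |EuclideanSpace.single i0 (ε i0) i| ≤ 1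
    rw [Finset.sum_eq_single i0]
    · simp [EuclideanSpace.single_apply, habs]
    · intro b _ hb; simp [EuclideanSpace.single_apply, hb]
    · simp
  · show ∑ i, ε i * EuclideanSpace.single i0 (ε i0) i = 1
    rw [Finset.sum_eq_single i0]
    · simp [EuclideanSpace.single_apply, eps_sq hε.1, habs]
    · intro b _ hb; simp [EuclideanSpace.single_apply, hb]
    · simp

lemma Ff_nonempty {ε : Fin d → ℝ} (hd : 1 ≤ d) (hk1 : 1 ≤ k) (hε : ε ∈ sgnset d k) :
    (Ff d (k:ℝ) ε).Nonempty := by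
  obtain ⟨i0, hi0⟩ := eps_exists_ne hk1 hε
  exact ⟨_, single_mem_Ff hd hk1 hε hi0⟩

lemma Ff_exposed {ε : Fin d → ℝ} (hd : 1 ≤ d) (hk1 : 1 ≤ k) (hε : ε ∈ sgnset d k) :
    IsExposed ℝ (rho d (k:ℝ)) (Ff d (k:ℝ) ε) := by
  intro _
  refine ⟨linC ε, ?_⟩
  obtain ⟨i0, hi0⟩ := eps_exists_ne hk1 hε
  have hp0 := single_mem_Ff hd hk1 hε hi0
  ext x
  simp only [Ff, Set.mem_setOf_eq, linC_apply]
  constructor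
  · rintro ⟨hx, h1⟩
    refine ⟨hx, fun y hy => ?_⟩
    rw [h1]
    exact rho_le_one hd hk1 hε y hy
  · rintro ⟨hx, h1⟩
    refine ⟨hx, le_antisymm (rho_le_one hd hk1 hε x hx) ?_⟩
    have := h1 _ hp0.1
    rw [hp0.2] at this
    exact this

lemma q_mem_Ff {ε : Fin d → ℝ} (hk1 : 1 ≤ k) (hε : ε ∈ sgnset d k) :
    (WithLp.toLp 2 (fun i => ε i / k : Fin d → ℝ) : Esp d) ∈ Ff d (k:ℝ) ε := by
  have hk : (0:ℝ) < k := by exact_mod_cast hk1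
  constructor
  · apply shcube_subset_rho
    rw [mem_shcube hk]
    intro i
    show |ε i / (k:ℝ)| ≤ 1 / k
    rw [abs_div, abs_of_nonneg hk.le]
    gcongr
    exact eps_abs_le hε.1 i
  · show ∑ i, ε i * (ε i / k) = 1
    have : ∀ i, ε i * (ε i / k) = |ε i| / k := by
      intro i
      rw [← eps_sq hε.1 i]; ring
    rw [Finset.sum_congr rfl fun i _ => this i, ← Finset.sum_div, eps_sum hε]
    field_simp

lemma Ff_vectorSpan {ε : Fin d → ℝ} (hd : 1 ≤ d) (hk1 : 1 ≤ k) (hε : ε ∈ sgnset d k) :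
    vectorSpan ℝ (Ff d (k:ℝ) ε) = LinearMap.ker (lin ε) := by
  have hk : (0:ℝ) < k := by exact_mod_cast hk1
  apply le_antisymm
  · exact vectorSpan_le_ker (lin ε) (c := 1) fun x hx => hx.2
  · intro w hw
    rw [LinearMap.mem_ker, lin_apply] at hw
    set W := ∑ i, |w i| with hW
    have hW0 : 0 ≤ W := Finset.sum_nonneg fun i _ => abs_nonneg _
    set δ := 1/((k:ℝ)*(1+W)) with hδ
    have hδ0 : 0 < δ := by rw [hδ]; positivity
    have hkey : δ * (1+W) = 1/k := by rw [hδ]; field_simp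
    have hδW : ∀ i, δ * |w i| < 1/k := by
      intro i
      have h1 : |w i| ≤ W := Finset.single_le_sum (f := fun i => |w i|)
        (fun i _ => abs_nonneg _) (Finset.mem_univ i)
      have : δ * |w i| ≤ δ * W := by gcongr
      nlinarith
    set A : Esp d := (WithLp.toLp 2 (fun i => ε i / k + δ * (if ε i = 0 then 0 else w i) : Fin d → ℝ) : Esp d)
      with hA
    set B : Esp d := (WithLp.toLp 2 (fun i => ε i / k + δ * (if ε i = 0 then w i else 0) : Fin d → ℝ) : Esp d)
      with hB
    set q : Esp d := (WithLp.toLp 2 (fun i => ε i / k : Fin d → ℝ) : Esp d) with hq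
    have hsumA : ∑ i, ε i * A i = 1 := by
      have : ∀ i, ε i * A i = |ε i| / k + δ * (ε i * w i) := by
        intro i
        show ε i * (ε i / k + δ * (if ε i = 0 then 0 else w i)) = _
        by_cases h : ε i = 0
        · simp [h]
        · rw [if_neg h, ← eps_sq hε.1 i]; ring
      rw [Finset.sum_congr rfl fun i _ => this i, Finset.sum_add_distrib, ← Finset.sum_div,
        eps_sum hε, ← Finset.mul_sum, hw, mul_zero, add_zero]
      field_simp
    have hmemA : A ∈ Ff d (k:ℝ) ε := by
      have habsA : ∀ i, |A i| = ε i * A i := by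
        intro i
        by_cases h : ε i = 0
        · show |ε i / k + δ * (if ε i = 0 then 0 else w i)| = ε i * A i
          simp [h]
        · have habs1 : |ε i| = 1 := by rw [eps_abs hε.1]; simp [h]
          have hpos : 0 < ε i * A i := by
            have : ε i * A i = 1/k + δ * (ε i * w i) := by
              show ε i * (ε i / k + δ * (if ε i = 0 then 0 else w i)) = _
              rw [if_neg h]
              have h2 : ε i * ε i = 1 := by rw [eps_sq hε.1 i, habs1]
              have hkne : (k:ℝ) ≠ 0 := hk.ne'
              field_simp
              linear_combination h2
            rw [this]
            have h2 : δ * (ε i * w i) ≥ -(δ * |w i|) := by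
              have : ε i * w i ≥ -|w i| := by
                calc ε i * w i ≥ -|ε i * w i| := neg_abs_le _
                  _ = -(|ε i| * |w i|) := by rw [abs_mul]
                  _ = -|w i| := by rw [habs1, one_mul]
              calc δ * (ε i * w i) ≥ δ * (-|w i|) := by gcongr
                _ = -(δ * |w i|) := by ring
            have := hδW i
            linarith
          calc |A i| = |ε i| * |A i| := by rw [habs1, one_mul]
            _ = |ε i * A i| := (abs_mul _ _).symm
            _ = ε i * A i := abs_of_pos hpos
      constructor
      · apply cross_subset_rho
        show ∑ i, |A i| ≤ 1
        rw [Finset.sum_congr rfl fun i _ => habsA i, hsumA]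
      · exact hsumA
    have hmemB : B ∈ Ff d (k:ℝ) ε := by
      constructor
      · apply shcube_subset_rho
        rw [mem_shcube hk]
        intro i
        show |ε i / k + δ * (if ε i = 0 then w i else 0)| ≤ 1/k
        by_cases h : ε i = 0
        · rw [if_pos h, h]
          simp only [zero_div, zero_add, abs_mul, abs_of_pos hδ0]
          exact (hδW i).le
        · rw [if_neg h, mul_zero, add_zero, abs_div, abs_of_nonneg hk.le]
          have : |ε i| = 1 := by rw [eps_abs hε.1]; simp [h]
          rw [this]
      · show ∑ i, ε i * B i = 1
        have : ∀ i, ε i * B i = |ε i| / k := by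
          intro i
          show ε i * (ε i / k + δ * (if ε i = 0 then w i else 0)) = _
          by_cases h : ε i = 0
          · simp [h]
          · rw [if_neg h, mul_zero, add_zero, ← eps_sq hε.1 i]; ring
        rw [Finset.sum_congr rfl fun i _ => this i, ← Finset.sum_div, eps_sum hε]
        field_simp
    have hmemq : q ∈ Ff d (k:ℝ) ε := q_mem_Ff hk1 hε
    have h1 : A -ᵥ q ∈ vectorSpan ℝ (Ff d (k:ℝ) ε) := vsub_mem_vectorSpan ℝ hmemA hmemq
    have h2 : B -ᵥ q ∈ vectorSpan ℝ (Ff d (k:ℝ) ε) := vsub_mem_vectorSpan ℝ hmemB hmemq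
    have hweq : w = (1/δ) • ((A -ᵥ q) + (B -ᵥ q)) := by
      ext i
      show w i = (1/δ) * ((A i - q i) + (B i - q i))
      show w i = (1/δ) * ((ε i / k + δ * (if ε i = 0 then 0 else w i) - ε i / k)
        + (ε i / k + δ * (if ε i = 0 then w i else 0) - ε i / k))
      have hδne : δ ≠ 0 := ne_of_gt hδ0
      by_cases h : ε i = 0
      · rw [if_pos h, if_pos h]
        field_simp
        ring
      · rw [if_neg h, if_neg h]
        field_simp
        ring
    rw [hweq]
    exact Submodule.smul_mem _ _ (Submodule.add_mem _ h1 h2)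

lemma Ff_finrank {ε : Fin d → ℝ} (hd : 1 ≤ d) (hk1 : 1 ≤ k) (hε : ε ∈ sgnset d k) :
    Module.finrank ℝ (vectorSpan ℝ (Ff d (k:ℝ) ε)) = d - 1 := by
  rw [Ff_vectorSpan hd hk1 hε]
  obtain ⟨i0, hi0⟩ := eps_exists_ne hk1 hε
  exact finrank_ker_lin hi0

lemma Ff_inj_aux {ε ε' : Fin d → ℝ} (hd : 1 ≤ d) (hk1 : 1 ≤ k)
    (hε : ε ∈ sgnset d k) (hε' : ε' ∈ sgnset d k)
    (hFF : Ff d (k:ℝ) ε = Ff d (k:ℝ) ε') : ∀ i, ε i ≠ 0 → ε' i = ε i := by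
  intro i hi
  have hmem := single_mem_Ff hd hk1 hε hi
  rw [hFF] at hmem
  have this1 := hmem.2
  have key : ε' i * ε i = 1 := by
    rw [← this1]
    show _ = ∑ j, ε' j * EuclideanSpace.single i (ε i) j
    rw [Finset.sum_eq_single i]
    · simp [EuclideanSpace.single_apply]
    · intro b _ hb; simp [EuclideanSpace.single_apply, hb]
    · simp
  rcases hε.1 i with h2 | h2 | h2
  · rcases hε'.1 i with h | h | h <;> rw [h, h2] at key ⊢ <;> norm_num at key
  · rcases hε'.1 i with h | h | h <;> rw [h, h2] at key ⊢ <;> norm_num at key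
  · exact absurd h2 hi

lemma Ff_injOn (hd : 1 ≤ d) (hk1 : 1 ≤ k) :
    Set.InjOn (Ff d (k:ℝ)) (sgnset d k) := by
  intro ε hε ε' hε' hFF
  funext i
  by_cases h : ε i = 0
  · by_cases h' : ε' i = 0
    · rw [h, h']
    · exact Ff_inj_aux hd hk1 hε' hε hFF.symm i h'
  · exact (Ff_inj_aux hd hk1 hε hε' hFF i h).symm

lemma lin_single (u : Fin d → ℝ) (j : Fin d) (a : ℝ) :
    ∑ i, u i * EuclideanSpace.single j a i = u j * a := by
  rw [Finset.sum_eq_single j]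
  · simp [EuclideanSpace.single_apply]
  · intro b _ hb; simp [EuclideanSpace.single_apply, hb]
  · simp

lemma single_mem_cross {j : Fin d} {a : ℝ} (h : |a| ≤ 1) :
    EuclideanSpace.single j a ∈ cross d := by
  show ∑ i, |EuclideanSpace.single j a i| ≤ 1
  rw [Finset.sum_eq_single j]
  · simpa [EuclideanSpace.single_apply] using h
  · intro b _ hb; simp [EuclideanSpace.single_apply, hb]
  · simp

lemma vectorSpan_rho_top (hd : 1 ≤ d) {k : ℝ} : vectorSpan ℝ (rho d k) = ⊤ := by
  rw [eq_top_iff]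
  have h0 : (0 : Esp d) ∈ rho d k := cross_subset_rho (zero_mem_cross hd)
  have hsingle : ∀ i, EuclideanSpace.single i (1:ℝ) ∈ rho d k := fun i =>
    cross_subset_rho (single_mem_cross (by norm_num))
  have hmem : ∀ i, EuclideanSpace.single i (1:ℝ) ∈ vectorSpan ℝ (rho d k) := by
    intro i
    have := vsub_mem_vectorSpan ℝ (hsingle i) h0
    have h2 : EuclideanSpace.single i (1:ℝ) -ᵥ 0 = EuclideanSpace.single i (1:ℝ) := by
      show EuclideanSpace.single i (1:ℝ) - 0 = _
      rw [sub_zero]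
    rwa [h2] at this
  have hspan : Submodule.span ℝ (Set.range fun i : Fin d => EuclideanSpace.single i (1:ℝ)) = ⊤ := by
    have hb := ((EuclideanSpace.basisFun (Fin d) ℝ).toBasis).span_eq
    have : Set.range (⇑((EuclideanSpace.basisFun (Fin d) ℝ).toBasis)) = Set.range fun i : Fin d => EuclideanSpace.single i (1:ℝ) := by
      have hfg : ⇑((EuclideanSpace.basisFun (Fin d) ℝ).toBasis) = (fun i : Fin d => EuclideanSpace.single i (1:ℝ)) := by
        funext i
        simp [EuclideanSpace.single_apply]
      rw [hfg]
    rw [this] at hb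
    exact hb
  calc (⊤ : Submodule ℝ (Esp d)) = Submodule.span ℝ (Set.range fun i : Fin d => EuclideanSpace.single i (1:ℝ)) := hspan.symm
    _ ≤ vectorSpan ℝ (rho d k) := Submodule.span_le.2 (by rintro v ⟨i, rfl⟩; exact hmem i)

lemma sum_comb (u : Fin d → ℝ) (a b : Esp d) (p q : ℝ) :
    ∑ i, u i * (p • a + q • b) i = p * (∑ i, u i * a i) + q * (∑ i, u i * b i) := by
  simp only [PiLp.add_apply, PiLp.smul_apply, smul_eq_mul, Finset.mul_sum,
    ← Finset.sum_add_distrib]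
  apply Finset.sum_congr rfl; intro i _; ring

lemma comb_apply (a b : Esp d) (p q : ℝ) (j : Fin d) : (p • a + q • b) j = p * a j + q * b j := rfl

set_option maxHeartbeats 2000000 in
lemma facet_eq_Ff {F : Set (Esp d)} (hd : 1 ≤ d) (hk1 : 1 ≤ k) (hkd : k ≤ d)
    (hexp : IsExposed ℝ (rho d (k : ℝ)) F) (hne : F.Nonempty)
    (hdim : Module.finrank ℝ (vectorSpan ℝ F) = d - 1) :
    ∃ ε ∈ sgnset d k, F = Ff d (k : ℝ) ε := by
  have hk : (0:ℝ) < (k:ℝ) := by exact_mod_cast hk1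
  obtain ⟨l, hF⟩ := hexp hne
  set u : Fin d → ℝ := fun i => l (EuclideanSpace.single i 1) with hu
  have hl : ∀ x : Esp d, l x = ∑ i, u i * x i := fun x => clm_eq_lin l x
  have hFin : Nonempty (Fin d) := ⟨⟨0, hd⟩⟩
  have hU : (Finset.univ : Finset (Fin d)).Nonempty := Finset.univ_nonempty
  set Mc := Finset.univ.sup' hU (fun i => |u i|) with hMcdef
  set Mb := (∑ i, |u i|) / k with hMbdef
  set M := max Mc Mb with hMdef
  have hMcle : ∀ i, |u i| ≤ M := fun i =>
    (Finset.le_sup' (fun i => |u i|) (Finset.mem_univ i)).trans (le_max_left _ _)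
  have hMble : ∑ i, |u i| ≤ (k:ℝ) * M := by
    have h1 : Mb ≤ M := le_max_right _ _
    rw [hMbdef] at h1
    calc ∑ i, |u i| = (k:ℝ) * ((∑ i, |u i|)/(k:ℝ)) := by field_simp
      _ ≤ (k:ℝ) * M := by
          apply mul_le_mul_of_nonneg_left h1 hk.le
  have hM0 : 0 ≤ M := le_trans (abs_nonneg _) (hMcle (Classical.arbitrary _))
  have hchoice : M = Mc ∨ M = Mb := max_choice Mc Mb
  have hub : ∀ y ∈ rho d (k:ℝ), ∑ i, u i * y i ≤ M := rho_le hk hd hM0 hMcle hMble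
  set c : Fin d → ℝ := fun i => if 0 ≤ u i then 1 else -1 with hcdef
  have hcu : ∀ i, c i * u i = |u i| := by
    intro i
    rw [hcdef]
    by_cases h : 0 ≤ u i
    · simp [h, abs_of_nonneg h]
    · push_neg at h
      simp [not_le.2 h, abs_of_neg h]
  have hcc : ∀ i, c i * c i = 1 := by
    intro i
    rw [hcdef]
    by_cases h : 0 ≤ u i <;> simp [h]
  have hcabs : ∀ i, |c i| = 1 := by
    intro i
    rw [hcdef]
    by_cases h : 0 ≤ u i <;> simp [h]
  have hatt : ∃ y ∈ rho d (k:ℝ), ∑ i, u i * y i = M := by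
    rcases hchoice with hMM | hMM
    · obtain ⟨i0, _, hi0⟩ := Finset.exists_mem_eq_sup' hU (fun i => |u i|)
      refine ⟨EuclideanSpace.single i0 (c i0),
        cross_subset_rho (single_mem_cross (le_of_eq (hcabs i0))), ?_⟩
      rw [lin_single]
      rw [hMM, hMcdef, hi0, ← hcu i0]
      ring
    · refine ⟨(WithLp.toLp 2 (fun i => c i / k : Fin d → ℝ) : Esp d), shcube_subset_rho ?_, ?_⟩
      · rw [mem_shcube hk]
        intro i
        show |c i / (k:ℝ)| ≤ 1/(k:ℝ)
        rw [abs_div, abs_of_nonneg hk.le, hcabs]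
      · show ∑ i, u i * (c i / k) = M
        have he : ∀ i, u i * (c i / k) = |u i| / k := fun i => by rw [← hcu i]; ring
        rw [Finset.sum_congr rfl fun i _ => he i, ← Finset.sum_div]
        rw [hMM, hMbdef]
  have hFeq : F = {x ∈ rho d (k:ℝ) | ∑ i, u i * x i = M} := by
    obtain ⟨y0, hy0, hy0M⟩ := hatt
    rw [hF]; ext x
    simp only [Set.mem_setOf_eq]
    constructor
    · rintro ⟨hx, hmax⟩
      refine ⟨hx, le_antisymm (hub x hx) ?_⟩
      have := hmax y0 hy0
      rw [hl, hl, hy0M] at this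
      exact this
    · rintro ⟨hx, hxM⟩
      refine ⟨hx, fun y hy => ?_⟩
      rw [hl, hl, hxM]
      exact hub y hy
  by_cases hMpos : 0 < M
  swap
  · -- M = 0 case : F = rho, dimension d, contradiction
    have hM00 : M = 0 := le_antisymm (not_lt.1 hMpos) hM0
    have hu0 : ∀ i, u i = 0 := fun i =>
      abs_eq_zero.1 (le_antisymm (hM00 ▸ hMcle i) (abs_nonneg _))
    have hFr : F = rho d (k:ℝ) := by
      rw [hFeq]; ext x; simp only [Set.mem_setOf_eq]
      constructor
      · exact fun h => h.1
      · intro hx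
        refine ⟨hx, ?_⟩
        rw [hM00]
        simp [hu0]
    rw [hFr, vectorSpan_rho_top hd, finrank_top, finrank_euclideanSpace_fin] at hdim
    omega
  have hMbleM : Mb ≤ M := le_max_right Mc Mb
  rcases lt_or_eq_of_le hMbleM with hMbM | hMbM
  · -- Case I : Mb < M
    have key1 : ∀ x ∈ F, (∑ i, |x i| ≤ 1) ∧ ∑ i, u i * x i = M := by
      intro x hx
      rw [hFeq] at hx
      obtain ⟨hxr, hxM⟩ := hx
      rw [mem_rho_iff hk hd] at hxr
      obtain ⟨a, ha, b, hb, p, q, hp, hq, hpq, hxd⟩ := hxr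
      rw [mem_shcube hk] at hb
      have hsum : p * (∑ i, u i * a i) + q * (∑ i, u i * b i) = M := by
        rw [← sum_comb, hxd, hxM]
      have hA : ∑ i, u i * a i ≤ M := sum_le_cross hMcle hM0 ha
      have hB : ∑ i, u i * b i ≤ Mb := by
        apply sum_le_cube hk _ hb
        rw [hMbdef]
        field_simp
        exact le_rfl
      have hq0 : q = 0 := by
        by_contra hq0
        have hqpos : 0 < q := lt_of_le_of_ne hq (Ne.symm hq0)
        nlinarith
      have hp1 : p = 1 := by linarith
      have hxa : x = a := by
        rw [← hxd, hq0, hp1, one_smul, zero_smul, add_zero]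
      exact ⟨hxa ▸ ha, hxM⟩
    have hzero : ∀ x ∈ F, ∀ j, |u j| ≠ M → x j = 0 := fun x hx j hj =>
      cross_eq_case hMcle hMpos (key1 x hx).1 (key1 x hx).2 j hj
    by_cases hall : ∀ j, |u j| = M
    · exfalso
      have hsumd : ∑ i, |u i| = d * M := by
        rw [Finset.sum_congr rfl fun i _ => hall i, Finset.sum_const, Finset.card_univ,
          Fintype.card_fin, nsmul_eq_mul]
      have hdk : (k:ℝ) ≤ d := by exact_mod_cast hkd
      have hMbval : Mb = d * M / k := by rw [hMbdef, hsumd]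
      have : M ≤ Mb := by
        rw [hMbval, le_div_iff₀ hk]
        nlinarith
      linarith
    · exfalso
      push_neg at hall
      obtain ⟨j0, hj0⟩ := hall
      obtain ⟨i0, _, hi0⟩ := Finset.exists_mem_eq_sup' hU (fun i => |u i|)
      have hMcM : Mc = M := by
        rcases hchoice with h1 | h1
        · exact h1.symm
        · exfalso; rw [h1] at hMbM; exact lt_irrefl _ hMbM
      have hi0M : |u i0| = M := by rw [← hi0, ← hMcdef, hMcM]
      have hne01 : i0 ≠ j0 := fun h => hj0 (h ▸ hi0M)
      have h1 : ∀ x ∈ F, lin u x = M := fun x hx => (key1 x hx).2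
      set v : Fin d → ℝ := fun i => if i = j0 then (1:ℝ) else 0 with hvdef
      have hv : ∀ x : Esp d, lin v x = x j0 := by
        intro x
        show ∑ i, v i * x i = x j0
        rw [hvdef]
        rw [Finset.sum_eq_single j0]
        · simp
        · intro b _ hb; simp [hb]
        · simp
      have h2 : ∀ x ∈ F, lin v x = 0 := fun x hx => by
        rw [hv]; exact hzero x hx j0 hj0
      have hsurj : Function.Surjective ((lin u).prod (lin v)) := by
        apply surj_of_two (x1 := EuclideanSpace.single i0 (c i0))
          (x2 := EuclideanSpace.single j0 1)
        have e1 : lin u (EuclideanSpace.single i0 (c i0)) = M := by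
          show ∑ i, u i * EuclideanSpace.single i0 (c i0) i = M
          rw [lin_single, mul_comm, hcu, hi0M]
        have e2 : lin v (EuclideanSpace.single i0 (c i0)) = 0 := by
          rw [hv]
          simp [EuclideanSpace.single_apply, hne01.symm]
        have e4 : lin v (EuclideanSpace.single j0 1) = 1 := by
          rw [hv]
          simp [EuclideanSpace.single_apply]
        simp only [LinearMap.prod_apply, Function.prod]
        rw [e1, e2, e4]
        simp
        exact hMpos.ne'
      have hle := finrank_le_of_two h1 h2 hsurj
      have h2d : 2 ≤ d := by
        have : Nontrivial (Fin d) := ⟨⟨i0, j0, hne01⟩⟩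
        have := Fintype.one_lt_card (α := Fin d)
        exact (by simpa using this : 1 < d)
      omega
  · -- Case II : Mb = M
    have hsumk : ∑ i, |u i| = (k:ℝ) * M := by
      rw [← hMbM, hMbdef]
      field_simp
    have key2 : ∀ x ∈ F, ∃ t : ℝ, ∀ j, u j ≠ 0 → |u j| ≠ M → x j = t * c j := by
      intro x hx
      rw [hFeq] at hx
      obtain ⟨hxr, hxM⟩ := hx
      rw [mem_rho_iff hk hd] at hxr
      obtain ⟨a, ha, b, hb, p, q, hp, hq, hpq, hxd⟩ := hxr
      rw [mem_shcube hk] at hb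
      have hsum : p * (∑ i, u i * a i) + q * (∑ i, u i * b i) = M := by
        rw [← sum_comb, hxd, hxM]
      have hA : ∑ i, u i * a i ≤ M := sum_le_cross hMcle hM0 ha
      have hB : ∑ i, u i * b i ≤ M := sum_le_cube hk hMble hb
      refine ⟨q / k, ?_⟩
      intro j hj hjM
      have hbj : q ≠ 0 → b j = c j / k := by
        intro hq0
        have hqpos : 0 < q := lt_of_le_of_ne hq (Ne.symm hq0)
        have hBeq : ∑ i, u i * b i = M := by nlinarith
        have hcube := cube_eq_case hk hsumk hb hBeq j
        -- u j * b j = |u j| / k  ⟹  b j = c j / k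
        have hcj : c j * u j = |u j| := hcu j
        have : u j * b j = (c j * u j) / k := by rw [hcj]; exact hcube
        field_simp at this
        rcases mul_eq_mul_left_iff.1 (by rw [this] : u j * (b j * k) = u j * c j) with h | h
        · field_simp
          linarith [h]
        · exact absurd h hj
      have haj : p ≠ 0 → a j = 0 := by
        intro hp0
        have hppos : 0 < p := lt_of_le_of_ne hp (Ne.symm hp0)
        have hAeq : ∑ i, u i * a i = M := by nlinarith
        exact cross_eq_case hMcle hMpos ha hAeq j hjM
      have hxj : x j = p * a j + q * b j := by rw [← hxd]; rfl
      by_cases hq0 : q = 0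
      · have hp1 : p = 1 := by linarith
        rw [hxj, hq0, haj (by rw [hp1]; norm_num)]
        ring
      · rw [hxj, hbj hq0]
        by_cases hp0 : p = 0
        · rw [hp0]
          ring
        · rw [haj hp0]
          ring
    set Mid := Finset.univ.filter (fun j => u j ≠ 0 ∧ |u j| ≠ M) with hMiddef
    rcases Nat.lt_or_ge Mid.card 2 with hMlt | hMge
    · by_cases hM0c : Mid.card = 0
      · -- good case : every u i is 0 or ±M
        have hmid : ∀ i, u i = 0 ∨ |u i| = M := by
          intro i
          by_contra hcon
          push_neg at hcon
          have hi : i ∈ Mid := Finset.mem_filter.2 ⟨Finset.mem_univ i, hcon.1, hcon.2⟩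
          rw [Finset.card_eq_zero] at hM0c
          rw [hM0c] at hi
          exact absurd hi (Finset.notMem_empty i)
        set ε : Fin d → ℝ := fun i => u i / M with hεdef
        have hMne : M ≠ 0 := ne_of_gt hMpos
        have huε : ∀ i, u i = M * ε i := fun i => by rw [hεdef]; field_simp
        have htri : ∀ i, ε i = 1 ∨ ε i = -1 ∨ ε i = 0 := by
          intro i
          rcases hmid i with h | h
          · right; right; rw [hεdef]; simp [h]
          · rcases (abs_eq hM0).1 h with h' | h'
            · left; rw [hεdef]; field_simp [h']; linarith [h']
            · right; left; rw [hεdef]; field_simp [h']; linarith [h']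
        have hsumε : ∑ i, |ε i| = (k:ℝ) := by
          have he : ∀ i, |ε i| = |u i| / M := by
            intro i; rw [hεdef]
            show |u i / M| = _
            rw [abs_div, abs_of_pos hMpos]
          rw [Finset.sum_congr rfl fun i _ => he i, ← Finset.sum_div, hsumk]
          field_simp
        have hcard : (Finset.univ.filter fun i => ε i ≠ 0).card = k := by
          have h1 : ∑ i, |ε i| = ((Finset.univ.filter fun i => ε i ≠ 0).card : ℝ) := by
            calc ∑ i, |ε i| = ∑ i, (if ε i ≠ 0 then (1:ℝ) else 0) := by
                  apply Finset.sum_congr rfl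
                  intro i _
                  rcases htri i with h | h | h <;> simp [h]
              _ = _ := by rw [Finset.sum_boole]
          rw [hsumε] at h1
          exact_mod_cast h1.symm
        refine ⟨ε, ⟨htri, hcard⟩, ?_⟩
        rw [hFeq]
        ext x
        simp only [Ff, Set.mem_setOf_eq]
        apply and_congr_right
        intro _
        have hrw : ∑ i, u i * x i = M * ∑ i, ε i * x i := by
          rw [Finset.mul_sum]
          apply Finset.sum_congr rfl
          intro i _
          rw [huε i]; ring
        rw [hrw]
        constructor
        · intro h
          have : M * ∑ i, ε i * x i = M * 1 := by rw [h, mul_one]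
          exact mul_left_cancel₀ hMne this
        · intro h
          rw [h, mul_one]
      · -- Mid.card = 1 : arithmetic contradiction
        exfalso
        have hM1c : Mid.card = 1 := by omega
        obtain ⟨j0, hj0eq⟩ := Finset.card_eq_one.1 hM1c
        have hj0mem : j0 ∈ Mid := by rw [hj0eq]; exact Finset.mem_singleton_self j0
        have hj0' := (Finset.mem_filter.1 hj0mem).2
        set a := (Finset.univ.filter fun i => |u i| = M).card with hadef
        have hsplit : ∑ i, |u i| = a * M + |u j0| := by
          rw [← Finset.sum_filter_add_sum_filter_not Finset.univ (fun i => |u i| = M)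
            (fun i => |u i|)]
          congr 1
          · rw [Finset.sum_congr rfl (fun i hi => (Finset.mem_filter.1 hi).2),
              Finset.sum_const, nsmul_eq_mul]
          · have hstep : (Finset.univ.filter fun i => ¬|u i| = M).sum (fun i => |u i|)
                = Mid.sum (fun i => |u i|) := by
              rw [← Finset.sum_filter_of_ne (p := fun j => u j ≠ 0 ∧ |u j| ≠ M)
                (f := fun i => |u i|) (s := Finset.univ.filter fun i => ¬|u i| = M)
                (fun x hx hfx => ⟨fun h0 => hfx (by show |u x| = 0; rw [h0]; simp),
                  (Finset.mem_filter.1 hx).2⟩)]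
              congr 1
              rw [hMiddef, Finset.filter_filter]
              apply Finset.filter_congr
              intro i _
              constructor
              · intro h; tauto
              · intro h; tauto
            rw [hstep, hj0eq, Finset.sum_singleton]
        have hval : 0 < |u j0| := abs_pos.2 hj0'.1
        have hvalM : |u j0| < M := lt_of_le_of_ne (hMcle j0) hj0'.2
        have hak : (a:ℝ) < k := by
          have : (a:ℝ) * M < (k:ℝ) * M := by rw [← hsumk, hsplit]; linarith
          exact lt_of_mul_lt_mul_right (by linarith) hM0
        have hka : (k:ℝ) < a + 1 := by
          have : (k:ℝ) * M < ((a:ℝ) + 1) * M := by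
            rw [← hsumk, hsplit]
            nlinarith
          exact lt_of_mul_lt_mul_right (by linarith) hM0
        have h1 : a < k := by exact_mod_cast hak
        have h2 : k < a + 1 := by exact_mod_cast hka
        omega
    · -- Mid.card ≥ 2 : dimension contradiction
      exfalso
      obtain ⟨j0, hj0m, j1, hj1m, hne01⟩ := Finset.one_lt_card.1 hMge
      have hj0' := (Finset.mem_filter.1 hj0m).2
      have hj1' := (Finset.mem_filter.1 hj1m).2
      set v : Fin d → ℝ := fun i => if i = j0 then c j0 else if i = j1 then -(c j1) else 0
        with hvdef
      have hv : ∀ x : Esp d, lin v x = c j0 * x j0 - c j1 * x j1 := by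
        intro x
        show ∑ i, v i * x i = _
        calc ∑ i, v i * x i
            = ∑ i, ((if i = j0 then c j0 * x i else 0) + (if i = j1 then -(c j1) * x i else 0)) := by
              apply Finset.sum_congr rfl
              intro i _
              simp only [hvdef]
              by_cases h0 : i = j0
              · subst h0
                rw [if_pos rfl, if_pos rfl, if_neg hne01, add_zero]
              · rw [if_neg h0, if_neg h0]
                by_cases h1 : i = j1
                · subst h1
                  rw [if_pos rfl, if_pos rfl, zero_add]
                · rw [if_neg h1, if_neg h1, zero_mul, add_zero]
          _ = c j0 * x j0 - c j1 * x j1 := by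
              rw [Finset.sum_add_distrib, Finset.sum_ite_eq' Finset.univ j0,
                Finset.sum_ite_eq' Finset.univ j1]
              simp
              ring
      have h1 : ∀ x ∈ F, lin u x = M := by
        intro x hx
        rw [hFeq] at hx
        exact hx.2
      have h2 : ∀ x ∈ F, lin v x = 0 := by
        intro x hx
        obtain ⟨t, ht⟩ := key2 x hx
        rw [hv, ht j0 hj0'.1 hj0'.2, ht j1 hj1'.1 hj1'.2]
        linear_combination t * (hcc j0) - t * (hcc j1)
      have hsurj : Function.Surjective ((lin u).prod (lin v)) := by
        apply surj_of_two (x1 := EuclideanSpace.single j0 (c j0))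
          (x2 := EuclideanSpace.single j1 (c j1))
        have e1 : lin u (EuclideanSpace.single j0 (c j0)) = |u j0| := by
          show ∑ i, u i * EuclideanSpace.single j0 (c j0) i = _
          rw [lin_single, mul_comm, hcu]
        have e2 : lin v (EuclideanSpace.single j0 (c j0)) = 1 := by
          rw [hv]
          simp [EuclideanSpace.single_apply, hne01.symm]
          exact hcc j0
        have e3 : lin u (EuclideanSpace.single j1 (c j1)) = |u j1| := by
          show ∑ i, u i * EuclideanSpace.single j1 (c j1) i = _
          rw [lin_single, mul_comm, hcu]
        have e4 : lin v (EuclideanSpace.single j1 (c j1)) = -1 := by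
          rw [hv]
          simp [EuclideanSpace.single_apply, hne01]
          exact hcc j1
        simp only [LinearMap.prod_apply, Function.prod]
        rw [e1, e2, e3, e4]
        have hv0 : 0 < |u j0| := abs_pos.2 hj0'.1
        have hv1 : 0 ≤ |u j1| := abs_nonneg _
        intro hcon
        nlinarith
      have hle := finrank_le_of_two h1 h2 hsurj
      have h2d : 2 ≤ d := by
        have : Nontrivial (Fin d) := ⟨⟨j0, j1, hne01⟩⟩
        have := Fintype.one_lt_card (α := Fin d)
        exact (by simpa using this : 1 < d)
      omega

end parts

section count

variable {k : ℕ}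

lemma bool_filter_card (s : Finset (Fin d)) :
    (Finset.univ.filter (fun b : Fin d → Bool => ∀ i ∉ s, b i = false)).card = 2 ^ s.card := by
  classical
  rw [← Finset.card_powerset]
  apply Finset.card_bij (fun b _ => Finset.univ.filter (fun i => b i = true))
  · intro b hb
    simp only [Finset.mem_filter, Finset.mem_univ, true_and] at hb
    rw [Finset.mem_powerset]
    intro i hi
    simp only [Finset.mem_filter, Finset.mem_univ, true_and] at hi
    by_contra hcon
    rw [hb i hcon] at hi
    exact Bool.false_ne_true hi
  · intro b1 hb1 b2 hb2 heq
    funext i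
    have h1 : i ∈ Finset.univ.filter (fun i => b1 i = true) ↔
        i ∈ Finset.univ.filter (fun i => b2 i = true) := by rw [heq]
    simp only [Finset.mem_filter, Finset.mem_univ, true_and] at h1
    cases hx : b1 i <;> cases hy : b2 i
    · rfl
    · exact absurd (h1.2 hy) (by simp [hx])
    · exact absurd (h1.1 hx) (by simp [hy])
    · rfl
  · intro t ht
    rw [Finset.mem_powerset] at ht
    refine ⟨fun i => decide (i ∈ t), ?_, ?_⟩
    · simp only [Finset.mem_filter, Finset.mem_univ, true_and]
      intro i hi
      simp only [decide_eq_false_iff_not]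
      exact fun hit => hi (ht hit)
    · ext i
      simp only [Finset.mem_filter, Finset.mem_univ, true_and, decide_eq_true_eq]

lemma sgnset_ncard (hd : 1 ≤ d) (hk1 : 1 ≤ k) (hkd : k ≤ d) :
    (sgnset d k).ncard = 2 ^ k * d.choose k := by
  classical
  set G : Finset (Fin d) × (Fin d → Bool) → (Fin d → ℝ) :=
    fun p i => if i ∈ p.1 then (if p.2 i then 1 else -1) else 0 with hG
  set T : Finset (Finset (Fin d) × (Fin d → Bool)) :=
    Finset.univ.filter (fun p => p.1.card = k ∧ ∀ i ∉ p.1, p.2 i = false) with hT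
  have hGmem : ∀ (p : Finset (Fin d) × (Fin d → Bool)) (i : Fin d),
      (i ∈ p.1 → (G p i = 1 ∨ G p i = -1)) ∧ (i ∉ p.1 → G p i = 0) := by
    intro p i
    constructor
    · intro h
      simp only [hG]
      rw [if_pos h]
      cases hb : p.2 i
      · right; rw [if_neg (by simp [hb])]
      · left; rw [if_pos (by simp [hb])]
    · intro h
      simp only [hG]
      rw [if_neg h]
  have hset : sgnset d k = ↑(T.image G) := by
    ext ε
    simp only [Finset.coe_image, Set.mem_image, Finset.mem_coe, hT, Finset.mem_filter,
      Finset.mem_univ, true_and]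
    constructor
    · rintro ⟨htri, hcard⟩
      refine ⟨(Finset.univ.filter (fun i => ε i ≠ 0), fun i => decide (ε i = 1)),
        ⟨hcard, ?_⟩, ?_⟩
      · intro i hi
        simp only [Finset.mem_filter, Finset.mem_univ, true_and, not_not] at hi
        simp [hi]
      · funext i
        simp only [hG]
        by_cases h : ε i = 0
        · rw [if_neg (by simp [h])]
          exact h.symm
        · rw [if_pos (by simp [h])]
          rcases htri i with h1 | h1 | h1
          · rw [if_pos (by simp [h1])]
            exact h1.symm
          · rw [if_neg (by simp [h1]; norm_num)]
            exact h1.symm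
          · exact absurd h1 h
    · rintro ⟨p, ⟨hpc, hpf⟩, rfl⟩
      constructor
      · intro i
        by_cases h : i ∈ p.1
        · rcases ((hGmem p i).1 h) with h1 | h1
          · left; exact h1
          · right; left; exact h1
        · right; right; exact (hGmem p i).2 h
      · have hfe : (Finset.univ.filter fun i => G p i ≠ 0) = p.1 := by
          ext i
          simp only [Finset.mem_filter, Finset.mem_univ, true_and]
          constructor
          · intro hne
            by_contra hcon
            exact hne ((hGmem p i).2 hcon)
          · intro h
            rcases (hGmem p i).1 h with h1 | h1 <;> rw [h1] <;> norm_num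
        rw [hfe]
        exact hpc
  have hinj : Set.InjOn G ↑T := by
    rintro ⟨s, b⟩ hs ⟨s', b'⟩ hs' heq
    simp only [hT, Finset.coe_filter, Set.mem_setOf_eq, Finset.mem_univ, true_and] at hs hs'
    have hss : s = s' := by
      ext i
      constructor
      · intro hi
        by_contra hcon
        have h1 := (hGmem (s, b) i).1 hi
        have h2 := (hGmem (s', b') i).2 hcon
        rw [heq] at h1
        rw [h2] at h1
        rcases h1 with h1 | h1 <;> norm_num at h1
      · intro hi
        by_contra hcon
        have h1 := (hGmem (s', b') i).1 hi
        have h2 := (hGmem (s, b) i).2 hcon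
        rw [← heq] at h1
        rw [h2] at h1
        rcases h1 with h1 | h1 <;> norm_num at h1
    subst hss
    have hbb : b = b' := by
      funext i
      by_cases h : i ∈ s
      · have := congrFun heq i
        simp only [hG] at this
        rw [if_pos h, if_pos h] at this
        cases hx : b i <;> cases hy : b' i
        · rfl
        · simp only [hx, hy] at this; norm_num at this
        · simp only [hx, hy] at this; norm_num at this
        · rfl
      · rw [hs.2 i h, hs'.2 i h]
    rw [hbb]
  have hTcard : T.card = d.choose k * 2 ^ k := by
    have hsplit : T = (Finset.univ.powersetCard k).biUnion
        (fun s => (Finset.univ.filter (fun b : Fin d → Bool => ∀ i ∉ s, b i = false)).image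
          (fun b => (s, b))) := by
      ext p
      simp only [hT, Finset.mem_filter, Finset.mem_univ, true_and, Finset.mem_biUnion,
        Finset.mem_powersetCard, Finset.mem_image]
      constructor
      · rintro ⟨h1, h2⟩
        exact ⟨p.1, ⟨Finset.subset_univ _, h1⟩, p.2, ⟨h2, rfl⟩⟩
      · rintro ⟨s', ⟨_, h1⟩, b', ⟨hb', heq⟩⟩
        rw [← heq]
        exact ⟨h1, hb'⟩
    rw [hsplit, Finset.card_biUnion]
    · have hterm : ∀ s ∈ Finset.univ.powersetCard k,
          ((Finset.univ.filter (fun b : Fin d → Bool => ∀ i ∉ s, b i = false)).image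
            (fun b => (s, b))).card = 2 ^ k := by
        intro s hs
        rw [Finset.card_image_of_injective _ (fun b1 b2 h => (Prod.mk.inj h).2),
          bool_filter_card]
        rw [Finset.mem_powersetCard] at hs
        rw [hs.2]
      rw [Finset.sum_congr rfl hterm, Finset.sum_const, Finset.card_powersetCard,
        Finset.card_univ, Fintype.card_fin, smul_eq_mul]
    · intro s1 hs1 s2 hs2 hne
      simp only [Function.onFun]
      rw [Finset.disjoint_left]
      intro p hp1 hp2
      simp only [Finset.mem_image] at hp1 hp2
      obtain ⟨b1, _, he1⟩ := hp1
      obtain ⟨b2, _, he2⟩ := hp2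
      apply hne
      rw [← he1] at he2
      exact ((Prod.mk.inj he2).1).symm
  rw [hset, Set.ncard_coe_finset, Finset.card_image_of_injOn hinj, hTcard]
  ring

end count

/-- For integer `k` with `1 ≤ k ≤ d`, the polytope `ρ_{d,k}` has `2^k · binom(d,k)` facets,
i.e. `(d-1)`-dimensional exposed faces. -/
theorem card_facets_rho (d k : ℕ) (hd : 1 ≤ d) (hk1 : 1 ≤ k) (hkd : k ≤ d) :
    {F : Set (EuclideanSpace ℝ (Fin d)) | IsExposed ℝ (rho d (k : ℝ)) F ∧ F.Nonempty ∧
        Module.finrank ℝ (vectorSpan ℝ F) = d - 1}.ncard = 2 ^ k * d.choose k := by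
  have hset : {F : Set (EuclideanSpace ℝ (Fin d)) | IsExposed ℝ (rho d (k : ℝ)) F ∧ F.Nonempty ∧
      Module.finrank ℝ (vectorSpan ℝ F) = d - 1} = (Ff d (k:ℝ)) '' (sgnset d k) := by
    ext F
    constructor
    · rintro ⟨h1, h2, h3⟩
      obtain ⟨ε, hε, hFe⟩ := facet_eq_Ff hd hk1 hkd h1 h2 h3
      exact ⟨ε, hε, hFe.symm⟩
    · rintro ⟨ε, hε, rfl⟩
      exact ⟨Ff_exposed hd hk1 hε, Ff_nonempty hd hk1 hε, Ff_finrank hd hk1 hε⟩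
  rw [hset, Set.ncard_image_of_injOn (Ff_injOn hd hk1), sgnset_ncard hd hk1 hkd]
end
end

section
/- Let d ≥ 1 and let k be an integer with 1 ≤ k ≤ d. The extreme points (vertices) of the polytope ρ*_{d,k} = (k β_d) ∩ γ_d are exactly the 2^k·binom(d,k) vectors in {−1,0,1}^d having exactly k non-zero coordinates. -/
open scoped Pointwise

noncomputable section

/-- The polytope `ρ*_{d,k} = (k β_d) ∩ γ_d`. -/
def rhoStar (d : ℕ) (k : ℝ) : Set (EuclideanSpace ℝ (Fin d)) := (k • cross d) ∩ hcube d

lemma mem_rhoStar_iff {d : ℕ} {k : ℝ} (hk : 0 < k) (x : EuclideanSpace ℝ (Fin d)) :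
    x ∈ rhoStar d k ↔ (∑ i, |x i| ≤ k) ∧ ∀ i, |x i| ≤ 1 := by
  have h1 : x ∈ k • cross d ↔ ∑ i, |x i| ≤ k := by
    rw [Set.mem_smul_set_iff_inv_smul_mem₀ hk.ne' (cross d) x]
    have : ∀ i, |(k⁻¹ • x) i| = k⁻¹ * |x i| := by
      intro i
      simp [PiLp.smul_apply, abs_mul, abs_of_pos (inv_pos.2 hk)]
    simp only [cross, Set.mem_setOf_eq, this, ← Finset.mul_sum]
    rw [inv_mul_le_iff₀ hk, mul_one]
  constructor
  · rintro ⟨ha, hb⟩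
    exact ⟨h1.1 ha, hb⟩
  · rintro ⟨ha, hb⟩
    exact ⟨h1.2 ha, hb⟩

lemma not_extreme_of_perturb {d : ℕ} {s : Set (EuclideanSpace ℝ (Fin d))}
    {x v : EuclideanSpace ℝ (Fin d)} (hv : v ≠ 0) (hy : x + v ∈ s) (hz : x - v ∈ s) :
    x ∉ Set.extremePoints ℝ s := by
  intro hx
  rw [mem_extremePoints] at hx
  have hseg : x ∈ openSegment ℝ (x + v) (x - v) := by
    refine ⟨1/2, 1/2, by norm_num, by norm_num, by norm_num, ?_⟩
    module
  have := (hx.2 _ hy _ hz hseg).1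
  apply hv
  have : x + v - x = 0 := by rw [this]; abel
  simpa using this

lemma sum_update1 {d : ℕ} (f : Fin d → ℝ) (i : Fin d) (c : ℝ) :
    ∑ t, Function.update f i c t = ∑ t, f t - f i + c := by
  classical
  rw [Finset.sum_update_of_mem (Finset.mem_univ i)]
  rw [← Finset.erase_eq, Finset.sum_erase_eq_sub (Finset.mem_univ i)]
  ring

lemma sum_update2 {d : ℕ} (f : Fin d → ℝ) {i j : Fin d} (hij : j ≠ i) (c1 c2 : ℝ) :
    ∑ t, Function.update (Function.update f i c1) j c2 t
      = ∑ t, f t - f i - f j + c1 + c2 := by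
  classical
  rw [sum_update1, sum_update1, Function.update_of_ne hij]
  ring

lemma single_pt_apply {d : ℕ} (x : EuclideanSpace ℝ (Fin d)) (i t : Fin d) (c : ℝ) :
    (x + EuclideanSpace.single i c) t = if t = i then x i + c else x t := by
  classical
  by_cases h : t = i
  · subst h; simp [EuclideanSpace.single_apply]
  · simp [EuclideanSpace.single_apply, h]

lemma abs_single_pt {d : ℕ} (x : EuclideanSpace ℝ (Fin d)) (i : Fin d) (c : ℝ) :
    (fun t => |(x + EuclideanSpace.single i c) t|)
      = Function.update (fun t => |x t|) i (|x i + c|) := by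
  classical
  funext t
  rw [single_pt_apply]
  by_cases h : t = i
  · subst h; simp [Function.update]
  · simp [Function.update, h]

/-- Single-coordinate perturbation: if the ℓ¹ sum is strictly below `k` and coordinate `i`
is strictly inside the cube, then `x` is not extreme. -/
lemma not_extreme_single {d : ℕ} {k : ℝ} (hk : 0 < k) {x : EuclideanSpace ℝ (Fin d)}
    (hx : x ∈ rhoStar d k) {i : Fin d} (hsum : ∑ j, |x j| < k) (hi : |x i| < 1) :
    x ∉ Set.extremePoints ℝ (rhoStar d k) := by
  classical
  rw [mem_rhoStar_iff hk] at hx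
  set ε : ℝ := min (k - ∑ j, |x j|) (1 - |x i|) with hεdef
  have hε0 : 0 < ε := lt_min (by linarith) (by linarith)
  have hεk : ε ≤ k - ∑ j, |x j| := min_le_left _ _
  have hε1 : ε ≤ 1 - |x i| := min_le_right _ _
  have hmem : ∀ c : ℝ, |c| ≤ ε → x + EuclideanSpace.single i c ∈ rhoStar d k := by
    intro c hc
    rw [mem_rhoStar_iff hk]
    have habs : |x i + c| ≤ |x i| + ε := le_trans (abs_add_le _ _) (by linarith)
    constructor
    · have : ∑ t, |(x + EuclideanSpace.single i c) t|
          = ∑ t, |x t| - |x i| + |x i + c| := by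
        rw [show (∑ t, |(x + EuclideanSpace.single i c) t|)
            = ∑ t, Function.update (fun t => |x t|) i (|x i + c|) t from by
          rw [← abs_single_pt]]
        exact sum_update1 _ _ _
      rw [this]; linarith
    · intro t
      rw [single_pt_apply]
      by_cases h : t = i
      · subst h; rw [if_pos rfl]; linarith
      · rw [if_neg h]; exact hx.2 t
  have hz : x - EuclideanSpace.single i ε = x + EuclideanSpace.single i (-ε) := by
    ext t
    rw [single_pt_apply]
    by_cases h : t = i
    · subst h; simp [EuclideanSpace.single_apply]; ring
    · simp [EuclideanSpace.single_apply, h]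
  refine not_extreme_of_perturb (v := EuclideanSpace.single i ε) ?_
    (hmem ε (by rw [abs_of_pos hε0]))
    (by rw [hz]; exact hmem (-ε) (by rw [abs_neg, abs_of_pos hε0]))
  intro h
  have := congrArg (fun v : EuclideanSpace ℝ (Fin d) => v i) h
  simp [EuclideanSpace.single_apply] at this
  exact hε0.ne' this

/-- Two-coordinate perturbation: if two coordinates are strictly between 0 and 1 in
absolute value, then `x` is not extreme. -/
lemma not_extreme_pair {d : ℕ} {k : ℝ} (hk : 0 < k) {x : EuclideanSpace ℝ (Fin d)}
    (hx : x ∈ rhoStar d k) {i j : Fin d} (hij : i ≠ j)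
    (hi0 : 0 < |x i|) (hi1 : |x i| < 1) (hj0 : 0 < |x j|) (hj1 : |x j| < 1) :
    x ∉ Set.extremePoints ℝ (rhoStar d k) := by
  classical
  rw [mem_rhoStar_iff hk] at hx
  set ε : ℝ := min (min (1 - |x i|) (|x j|)) (min (|x i|) (1 - |x j|)) with hεdef
  have hε0 : 0 < ε := lt_min (lt_min (by linarith) hj0) (lt_min hi0 (by linarith))
  have hε1 : ε ≤ 1 - |x i| := le_trans (min_le_left _ _) (min_le_left _ _)
  have hε2 : ε ≤ |x j| := le_trans (min_le_left _ _) (min_le_right _ _)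
  have hε3 : ε ≤ |x i| := le_trans (min_le_right _ _) (min_le_left _ _)
  have hε4 : ε ≤ 1 - |x j| := le_trans (min_le_right _ _) (min_le_right _ _)
  set a : ℝ := if 0 < x i then ε else -ε with hadef
  set b : ℝ := if 0 < x j then ε else -ε with hbdef
  have habs_plus : ∀ (t : ℝ), t ≠ 0 → |t + (if 0 < t then ε else -ε)| = |t| + ε := by
    intro t ht
    rcases lt_or_gt_of_ne ht with h | h
    · rw [if_neg (not_lt.2 h.le), abs_of_neg h, abs_of_neg (by linarith)]; ring
    · rw [if_pos h, abs_of_pos h, abs_of_pos (by linarith)]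
  have habs_minus : ∀ (t : ℝ), t ≠ 0 → ε ≤ |t| →
      |t - (if 0 < t then ε else -ε)| = |t| - ε := by
    intro t ht hle
    rcases lt_or_gt_of_ne ht with h | h
    · rw [abs_of_neg h] at hle
      rw [if_neg (not_lt.2 h.le), abs_of_neg h, abs_of_nonpos (by linarith)]; ring
    · rw [abs_of_pos h] at hle
      rw [if_pos h, abs_of_pos h, abs_of_nonneg (by linarith)]
  have hxi : x i ≠ 0 := fun h => by simp [h] at hi0
  have hxj : x j ≠ 0 := fun h => by simp [h] at hj0
  have hia : |x i + a| = |x i| + ε := habs_plus (x i) hxi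
  have hia' : |x i - a| = |x i| - ε := habs_minus (x i) hxi hε3
  have hja : |x j + b| = |x j| + ε := habs_plus (x j) hxj
  have hja' : |x j - b| = |x j| - ε := habs_minus (x j) hxj hε2
  -- the double-update vector
  set w : ℝ → ℝ → EuclideanSpace ℝ (Fin d) :=
    fun c1 c2 => WithLp.toLp 2 (Function.update (Function.update (x : Fin d → ℝ) i c1) j c2 :
      Fin d → ℝ) with hwdef
  have hwapp : ∀ c1 c2 t, w c1 c2 t = if t = j then c2 else if t = i then c1 else x t := by
    intro c1 c2 t
    by_cases h : t = j
    · subst h; simp [hwdef, Function.update]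
    · by_cases h' : t = i
      · subst h'; simp [hwdef, Function.update, h]
      · simp [hwdef, Function.update, h, h']
  have hwmem : ∀ c1 c2 : ℝ, |c1| + |c2| ≤ |x i| + |x j| → |c1| ≤ 1 → |c2| ≤ 1 →
      w c1 c2 ∈ rhoStar d k := by
    intro c1 c2 hsum h1 h2
    rw [mem_rhoStar_iff hk]
    constructor
    · have heq : (fun t => |w c1 c2 t|)
          = Function.update (Function.update (fun t => |x t|) i (|c1|)) j (|c2|) := by
        funext t
        rw [hwapp]
        by_cases h : t = j
        · subst h; simp [Function.update]
        · by_cases h' : t = i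
          · subst h'; simp [Function.update, h]
          · simp [Function.update, h, h']
      have : ∑ t, |w c1 c2 t| = ∑ t, |x t| - |x i| - |x j| + |c1| + |c2| := by
        rw [show (∑ t, |w c1 c2 t|) = ∑ t, Function.update
            (Function.update (fun t => |x t|) i (|c1|)) j (|c2|) t from by rw [← heq]]
        exact sum_update2 _ (Ne.symm hij) _ _
      rw [this]; linarith [hx.1]
    · intro t
      rw [hwapp]
      by_cases h : t = j
      · rw [if_pos h]; exact h2
      · rw [if_neg h]
        by_cases h' : t = i
        · rw [if_pos h']; exact h1
        · rw [if_neg h']; exact hx.2 t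
  set v : EuclideanSpace ℝ (Fin d) :=
    EuclideanSpace.single i a - EuclideanSpace.single j b with hvdef
  have hvapp : ∀ t, v t = (if t = i then a else 0) - (if t = j then b else 0) := by
    intro t
    have : v t = EuclideanSpace.single i a t - EuclideanSpace.single j b t := rfl
    rw [this, EuclideanSpace.single_apply, EuclideanSpace.single_apply]
  have hy : x + v = w (x i + a) (x j - b) := by
    ext t
    have : (x + v) t = x t + v t := rfl
    rw [this, hvapp, hwapp]
    by_cases h : t = j
    · subst h; rw [if_pos rfl, if_neg (Ne.symm hij), if_pos rfl]; ring
    · rw [if_neg h, if_neg h]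
      by_cases h' : t = i
      · subst h'; rw [if_pos rfl, if_pos rfl]; ring
      · rw [if_neg h', if_neg h']; ring
  have hz : x - v = w (x i - a) (x j + b) := by
    ext t
    have : (x - v) t = x t - v t := rfl
    rw [this, hvapp, hwapp]
    by_cases h : t = j
    · subst h; rw [if_pos rfl, if_neg (Ne.symm hij), if_pos rfl]; ring
    · rw [if_neg h, if_neg h]
      by_cases h' : t = i
      · subst h'; rw [if_pos rfl, if_pos rfl]; ring
      · rw [if_neg h', if_neg h']; ring
  have ha0 : a ≠ 0 := by
    rcases (by positivity : (0:ℝ) < ε).ne' with hne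
    by_cases h : 0 < x i <;> simp [hadef, h, hε0.ne']
  refine not_extreme_of_perturb (v := v) ?_ ?_ ?_
  · intro h
    have := congrArg (fun u : EuclideanSpace ℝ (Fin d) => u i) h
    rw [hvapp i, if_pos rfl, if_neg hij] at this
    exact ha0 (by simpa using this)
  · rw [hy]
    refine hwmem _ _ ?_ ?_ ?_
    · rw [hia, hja']; linarith
    · rw [hia]; linarith
    · rw [hja']
      have := abs_nonneg (x j); linarith [hx.2 j]
  · rw [hz]
    refine hwmem _ _ ?_ ?_ ?_
    · rw [hia', hja]; linarith
    · rw [hia']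
      have := abs_nonneg (x i); linarith [hx.2 i]
    · rw [hja]; linarith

lemma count_vertices (d k : ℕ) :
    {x : EuclideanSpace ℝ (Fin d) |
        (∀ i, x i = -1 ∨ x i = 0 ∨ x i = 1) ∧ {i | x i ≠ 0}.ncard = k}.ncard =
      2 ^ k * d.choose k := by
  classical
  set S : Set (EuclideanSpace ℝ (Fin d)) :=
    {x : EuclideanSpace ℝ (Fin d) |
        (∀ i, x i = -1 ∨ x i = 0 ∨ x i = 1) ∧ {i | x i ≠ 0}.ncard = k} with hSdef
  -- the sigma type of (support, signs)
  have key : ∀ (s : Finset (Fin d)) (ε : Fin d → Bool),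
      (WithLp.toLp 2 (fun i => if i ∈ s then (if ε i then (1:ℝ) else -1) else 0 :
        Fin d → ℝ) : EuclideanSpace ℝ (Fin d)) ∈ S ↔ s.card = k := by
    intro s ε
    have hsupp : {i | (WithLp.toLp 2 (fun i => if i ∈ s then (if ε i then (1:ℝ) else -1) else 0 :
          Fin d → ℝ) : EuclideanSpace ℝ (Fin d)) i ≠ 0}
        = (s : Set (Fin d)) := by
      ext i
      by_cases h : i ∈ s
      · by_cases h' : ε i <;> simp [h, h']
      · simp [h]
    constructor
    · rintro ⟨-, hcard⟩
      rw [hsupp, Set.ncard_coe_finset] at hcard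
      exact hcard
    · intro hcard
      refine ⟨fun i => ?_, ?_⟩
      · by_cases h : i ∈ s
        · by_cases h' : ε i <;> simp [h, h']
        · simp [h]
      · rw [hsupp, Set.ncard_coe_finset]
        exact hcard
  -- bijection from sigma type
  let T := Σ s : {s : Finset (Fin d) // s.card = k}, (↑s.1 → Bool)
  let G : T → ↥S := fun σ =>
    ⟨(WithLp.toLp 2 (fun i => if h : i ∈ σ.1.1 then (if σ.2 ⟨i, h⟩ then (1:ℝ) else -1) else 0 :
        Fin d → ℝ) : EuclideanSpace ℝ (Fin d)), by
      have : (fun i => if h : i ∈ σ.1.1 then (if σ.2 ⟨i, h⟩ then (1:ℝ) else -1) else 0)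
          = (fun i => if i ∈ σ.1.1 then
              (if (fun j => if h : j ∈ σ.1.1 then σ.2 ⟨j, h⟩ else false) i
                then (1:ℝ) else -1) else 0) := by
        funext i
        by_cases h : i ∈ σ.1.1 <;> simp [h]
      rw [show (WithLp.toLp 2 (fun i => if h : i ∈ σ.1.1 then (if σ.2 ⟨i, h⟩ then (1:ℝ) else -1) else 0 :
          Fin d → ℝ) : EuclideanSpace ℝ (Fin d)) = _ from congrArg (WithLp.toLp 2) this]
      exact (key _ _).2 σ.1.2⟩
  have hGval : ∀ (σ : T) (i : Fin d), (G σ : EuclideanSpace ℝ (Fin d)) i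
      = if h : i ∈ σ.1.1 then (if σ.2 ⟨i, h⟩ then (1:ℝ) else -1) else 0 := fun _ _ => rfl
  have hGbij : Function.Bijective G := by
    constructor
    · rintro ⟨⟨s, hs⟩, ε⟩ ⟨⟨s', hs'⟩, ε'⟩ h
      have hval : ∀ i : Fin d,
          (if h : i ∈ s then (if ε ⟨i, h⟩ then (1:ℝ) else -1) else 0)
            = if h : i ∈ s' then (if ε' ⟨i, h⟩ then (1:ℝ) else -1) else 0 := by
        intro i
        have := congrArg (fun y : ↥S => (y : EuclideanSpace ℝ (Fin d)) i) h
        simpa [hGval] using this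
      have hss : s = s' := by
        ext i
        have := hval i
        constructor
        · intro hi
          by_contra hi'
          rw [dif_pos hi, dif_neg hi'] at this
          by_cases hε : ε ⟨i, hi⟩
          · simp [hε] at this
          · simp [hε] at this
        · intro hi
          by_contra hi'
          rw [dif_neg hi', dif_pos hi] at this
          by_cases hε : ε' ⟨i, hi⟩
          · simp [hε] at this
          · simp [hε] at this
      subst hss
      have hεε : ε = ε' := by
        funext ⟨i, hi⟩
        have := hval i
        rw [dif_pos hi, dif_pos hi] at this
        by_cases hε : ε ⟨i, hi⟩ <;> by_cases hε' : ε' ⟨i, hi⟩ <;>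
          simp [hε, hε'] at this ⊢ <;> norm_num at this
      subst hεε
      rfl
    · rintro ⟨x, hxvals, hxcard⟩
      have hsupp : {i | x i ≠ 0} = ↑(Finset.univ.filter (fun i => x i ≠ 0)) := by
        ext i; simp
      rw [hsupp, Set.ncard_coe_finset] at hxcard
      refine ⟨⟨⟨Finset.univ.filter (fun i => x i ≠ 0), hxcard⟩,
        fun i => if x i.1 = 1 then true else false⟩, ?_⟩
      apply Subtype.ext
      ext i
      rw [hGval]
      by_cases h : i ∈ Finset.univ.filter (fun i => x i ≠ 0)
      · rw [dif_pos h]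
        have hne : x i ≠ 0 := by simpa using h
        rcases hxvals i with h1 | h1 | h1
        · norm_num [h1]
        · exact absurd h1 hne
        · norm_num [h1]
      · rw [dif_neg h]
        have : ¬ x i ≠ 0 := by simpa using h
        push_neg at this
        exact this.symm
  have h1 : S.ncard = Nat.card T := by
    rw [← Nat.card_coe_set_eq]
    exact (Nat.card_eq_of_bijective G hGbij).symm
  rw [h1, Nat.card_eq_fintype_card, Fintype.card_sigma]
  have h2 : ∀ σ : {s : Finset (Fin d) // s.card = k},
      Fintype.card (↑σ.1 → Bool) = 2 ^ k := by
    intro σ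
    rw [Fintype.card_fun, Fintype.card_coe, σ.2, Fintype.card_bool]
  rw [Finset.sum_congr rfl (fun σ _ => h2 σ), Finset.sum_const, Finset.card_univ,
    smul_eq_mul]
  have h3 : Fintype.card {s : Finset (Fin d) // s.card = k} = d.choose k := by
    rw [Fintype.card_subtype]
    have : Finset.univ.filter (fun s : Finset (Fin d) => s.card = k)
        = Finset.powersetCard k Finset.univ := by
      ext s
      simp [Finset.mem_powersetCard_univ]
    rw [this, Finset.card_powersetCard, Finset.card_univ, Fintype.card_fin]
  rw [h3, Nat.mul_comm]

lemma sum_abs_eq_card {d : ℕ} (x : EuclideanSpace ℝ (Fin d))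
    (hvals : ∀ i, x i = -1 ∨ x i = 0 ∨ x i = 1) [DecidablePred (fun i => x i ≠ 0)] :
    ∑ i, |x i| = ((Finset.univ.filter (fun i => x i ≠ 0)).card : ℝ) := by
  rw [← Finset.sum_boole]
  refine Finset.sum_congr rfl (fun i _ => ?_)
  rcases hvals i with h | h | h <;> norm_num [h]

/-- For integer `k` with `1 ≤ k ≤ d`, the vertices (extreme points) of `ρ*_{d,k}` are exactly
the `2^k · binom(d,k)` vectors in `{-1,0,1}^d` with exactly `k` non-zero coordinates. -/
theorem extremePoints_rhoStar (d k : ℕ) (hd : 1 ≤ d) (hk1 : 1 ≤ k) (hkd : k ≤ d) :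
    Set.extremePoints ℝ (rhoStar d (k : ℝ)) =
      {x : EuclideanSpace ℝ (Fin d) |
        (∀ i, x i = -1 ∨ x i = 0 ∨ x i = 1) ∧ {i | x i ≠ 0}.ncard = k} ∧
    {x : EuclideanSpace ℝ (Fin d) |
        (∀ i, x i = -1 ∨ x i = 0 ∨ x i = 1) ∧ {i | x i ≠ 0}.ncard = k}.ncard =
      2 ^ k * d.choose k := by
  classical
  have hk0 : (0:ℝ) < k := by exact_mod_cast hk1
  have hkd' : (k:ℝ) ≤ d := by exact_mod_cast hkd
  refine ⟨?_, count_vertices d k⟩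
  ext x
  simp only [Set.mem_setOf_eq]
  constructor
  · -- extreme point → vertex
    intro hx
    have hxm := (mem_extremePoints.1 hx).1
    have hxm' := (mem_rhoStar_iff hk0 x).1 hxm
    -- Step A: the ℓ¹ norm equals k
    have hsum_eq : ∑ i, |x i| = k := by
      rcases eq_or_lt_of_le hxm'.1 with h | h
      · exact h
      · exfalso
        have : ∃ i, |x i| < 1 := by
          by_contra hc
          push_neg at hc
          have : (d : ℝ) ≤ ∑ i, |x i| := by
            calc (d : ℝ) = ∑ _i : Fin d, (1:ℝ) := by
                  rw [Finset.sum_const, Finset.card_univ, Fintype.card_fin]; simp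
            _ ≤ ∑ i, |x i| := Finset.sum_le_sum (fun i _ => hc i)
          linarith
        obtain ⟨i, hi⟩ := this
        exact not_extreme_single hk0 hxm h hi hx
    -- Step B: all coordinates lie in {-1, 0, 1}
    have hvals : ∀ i, x i = -1 ∨ x i = 0 ∨ x i = 1 := by
      intro i
      by_contra hne
      push_neg at hne
      obtain ⟨hne1, hne0, hne2⟩ := hne
      have hi0 : 0 < |x i| := abs_pos.2 hne0
      have hi1 : |x i| < 1 := by
        rcases lt_or_eq_of_le (hxm'.2 i) with h | h
        · exact h
        · rcases abs_eq (by norm_num : (0:ℝ) ≤ 1) |>.1 h with h' | h'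
          · exact absurd h' hne2
          · exact absurd h' hne1
      -- find a second fractional coordinate
      have : ∃ j, j ≠ i ∧ 0 < |x j| ∧ |x j| < 1 := by
        by_contra hc
        push_neg at hc
        have hval01 : ∀ j ∈ Finset.univ.erase i, |x j| = if x j ≠ 0 then (1:ℝ) else 0 := by
          intro j hj
          have hji : j ≠ i := Finset.ne_of_mem_erase hj
          by_cases h0 : x j = 0
          · simp [h0]
          · rw [if_pos h0]
            have := hc j hji (abs_pos.2 h0)
            have := hxm'.2 j
            linarith
        set m : ℕ := ((Finset.univ.erase i).filter (fun j => x j ≠ 0)).card with hm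
        have hsum2 : ∑ j ∈ Finset.univ.erase i, |x j| = (m : ℝ) := by
          rw [Finset.sum_congr rfl hval01, Finset.sum_boole]
        have hsplit : ∑ j ∈ Finset.univ.erase i, |x j| = ∑ j, |x j| - |x i| :=
          Finset.sum_erase_eq_sub (Finset.mem_univ i)
        have hxi_eq : |x i| = (k : ℝ) - m := by
          rw [hsum2, hsum_eq] at hsplit
          linarith
        have hmk : (m : ℝ) < k := by linarith
        have hmk' : m < k := by exact_mod_cast hmk
        have : (m : ℝ) + 1 ≤ k := by exact_mod_cast hmk'
        linarith
      obtain ⟨j, hji, hj0, hj1⟩ := this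
      exact not_extreme_pair hk0 hxm (Ne.symm hji) hi0 hi1 hj0 hj1 hx
    refine ⟨hvals, ?_⟩
    -- Step C: the support has exactly k elements
    have hsupp : {i | x i ≠ 0} = ↑(Finset.univ.filter (fun i => x i ≠ 0)) := by
      ext i; simp
    rw [hsupp, Set.ncard_coe_finset]
    have := sum_abs_eq_card x hvals
    rw [hsum_eq] at this
    exact_mod_cast this.symm
  · -- vertex → extreme point
    rintro ⟨hvals, hcard⟩
    have hsupp : {i | x i ≠ 0} = ↑(Finset.univ.filter (fun i => x i ≠ 0)) := by
      ext i; simp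
    rw [hsupp, Set.ncard_coe_finset] at hcard
    have hsum_eq : ∑ i, |x i| = k := by
      rw [sum_abs_eq_card x hvals, hcard]
    have habs1 : ∀ i, |x i| ≤ 1 := by
      intro i
      rcases hvals i with h | h | h <;> norm_num [h]
    have hmem : x ∈ rhoStar d k := (mem_rhoStar_iff hk0 x).2 ⟨le_of_eq hsum_eq, habs1⟩
    rw [mem_extremePoints]
    refine ⟨hmem, ?_⟩
    intro y hy z hz hseg
    obtain ⟨a, b, ha, hb, hab, hxyz⟩ := hseg
    rw [mem_rhoStar_iff hk0] at hy hz
    have hcoord : ∀ i, a * y i + b * z i = x i := by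
      intro i
      have := congrArg (fun u : EuclideanSpace ℝ (Fin d) => u i) hxyz
      simpa [PiLp.smul_apply, smul_eq_mul] using this
    -- on the support, y and z agree with x
    have hcombo : ∀ p q : ℝ, p ≤ 1 → q ≤ 1 → a * p + b * q = 1 → p = 1 ∧ q = 1 := by
      intro p q hp hq h
      have h1 : a * p = a * 1 := by nlinarith
      have h2 : b * q = b * 1 := by nlinarith
      exact ⟨mul_left_cancel₀ ha.ne' h1, mul_left_cancel₀ hb.ne' h2⟩
    have hclaim1 : ∀ i, x i ≠ 0 → y i = x i ∧ z i = x i := by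
      intro i hi
      have hy1 := abs_le.1 (hy.2 i)
      have hz1 := abs_le.1 (hz.2 i)
      have hc := hcoord i
      rcases hvals i with h | h | h
      · have := hcombo (-(y i)) (-(z i)) (by linarith) (by linarith)
          (by rw [h] at hc; ring_nf; ring_nf at hc; linarith)
        rw [h]
        exact ⟨by linarith [this.1], by linarith [this.2]⟩
      · exact absurd h hi
      · have := hcombo (y i) (z i) hy1.2 hz1.2 (by rw [h] at hc; exact hc)
        rw [h]
        exact ⟨this.1, this.2⟩
    -- off the support, y and z vanish
    have hoff : ∀ w : EuclideanSpace ℝ (Fin d), (∑ i, |w i| ≤ k) →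
        (∀ i, x i ≠ 0 → w i = x i) → ∀ i, x i = 0 → w i = 0 := by
      intro w hwsum hwagree i hi0
      have hsplit := Finset.sum_filter_add_sum_filter_not Finset.univ
        (fun i => x i ≠ 0) (fun i => |w i|)
      have hfirst : ∑ j ∈ Finset.univ.filter (fun i => x i ≠ 0), |w j| = (k : ℝ) := by
        have : ∀ j ∈ Finset.univ.filter (fun i => x i ≠ 0), |w j| = 1 := by
          intro j hj
          have hj' : x j ≠ 0 := by simpa using hj
          rw [hwagree j hj']
          rcases hvals j with h | h | h
          · norm_num [h]
          · exact absurd h hj'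
          · norm_num [h]
        rw [Finset.sum_congr rfl this, Finset.sum_const, hcard]
        simp
      have hsecond_nonneg : (0:ℝ) ≤ ∑ j ∈ Finset.univ.filter (fun i => ¬ x i ≠ 0), |w j| :=
        Finset.sum_nonneg (fun j _ => abs_nonneg _)
      have hsecond : ∑ j ∈ Finset.univ.filter (fun i => ¬ x i ≠ 0), |w j| = 0 := by
        rw [hfirst] at hsplit
        linarith
      have := (Finset.sum_eq_zero_iff_of_nonneg (fun j _ => abs_nonneg (w j))).1 hsecond i
        (by simp [hi0])
      exact abs_eq_zero.1 this
    have hyx : y = x := by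
      ext i
      by_cases h : x i = 0
      · rw [hoff y hy.1 (fun j hj => (hclaim1 j hj).1) i h, h]
      · exact (hclaim1 i h).1
    have hzx : z = x := by
      ext i
      by_cases h : x i = 0
      · rw [hoff z hz.1 (fun j hj => (hclaim1 j hj).2) i h, h]
      · exact (hclaim1 i h).2
    exact ⟨hyx, hzx⟩
end
end
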